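/- arXiv:quant-ph/0305163 — 5 statements merged into one kernel-verified Lean document; each statement's English description precedes it below -/
import Mathlib

section
/- Let ρ, j : ℝ² → ℝ be C^1 with ρ > 0 everywhere, satisfying the continuity equation ∂_t ρ + ∂_x j = 0, and suppose the velocity field u = j/ρ generates a complete flow F for ẋ = u(t,x). Denote by X_s(τ, x₀) the x-coordinate at time τ of the trajectory passing through (s, x₀). Then for all τ, s ∈ ℝ and all real numbers c ≤ d: ∫_{X_τ(s,c)}^{X_τ(s,d)} ρ(τ,ξ) dξ = ∫_c^d ρ(s,ξ) dξ. -/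
open Set MeasureTheory intervalIntegral Asymptotics


-- partial derivative lemmas
lemma hasDerivAt_slice_fst (f : ℝ × ℝ → ℝ) (hf : ContDiff ℝ 1 f) (τ ξ : ℝ) :
    HasDerivAt (fun t => f (t, ξ)) (fderiv ℝ f (τ, ξ) (1, 0)) τ :=
  (hf.differentiable one_ne_zero (τ, ξ)).hasFDerivAt.comp_hasDerivAt τ
    ((hasDerivAt_id τ).prodMk (hasDerivAt_const τ ξ))

lemma hasDerivAt_slice_snd (f : ℝ × ℝ → ℝ) (hf : ContDiff ℝ 1 f) (τ ξ : ℝ) :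
    HasDerivAt (fun x => f (τ, x)) (fderiv ℝ f (τ, ξ) (0, 1)) ξ :=
  (hf.differentiable one_ne_zero (τ, ξ)).hasFDerivAt.comp_hasDerivAt ξ
    ((hasDerivAt_const ξ τ).prodMk (hasDerivAt_id ξ))


lemma param_deriv (ρ : ℝ × ℝ → ℝ) (hρ : ContDiff ℝ 1 ρ) (a b τ₀ : ℝ) :
    HasDerivAt (fun τ => ∫ ξ in a..b, ρ (τ, ξ))
      (∫ ξ in a..b, fderiv ℝ ρ (τ₀, ξ) (1, 0)) τ₀ := by
  obtain ⟨C, hC⟩ := ((isCompact_closedBall τ₀ 1).prod isCompact_uIcc).exists_bound_of_continuousOn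
    (s := Metric.closedBall τ₀ 1 ×ˢ uIcc a b) ((hρ.continuous_fderiv one_ne_zero).continuousOn)
  have key := intervalIntegral.hasDerivAt_integral_of_dominated_loc_of_deriv_le
    (𝕜 := ℝ) (μ := volume) (a := a) (b := b) (s := Metric.ball τ₀ 1)
    (F := fun τ ξ => ρ (τ, ξ)) (F' := fun τ ξ => fderiv ℝ ρ (τ, ξ) (1, 0))
    (x₀ := τ₀) (bound := fun _ => |C|) (Metric.ball_mem_nhds τ₀ one_pos)
    (Filter.Eventually.of_forall fun τ =>
      (hρ.continuous.comp (Continuous.prodMk_right τ)).aestronglyMeasurable)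
    ((hρ.continuous.comp (Continuous.prodMk_right τ₀)).intervalIntegrable a b)
    (((hρ.continuous_fderiv one_ne_zero).comp (Continuous.prodMk_right τ₀)).clm_apply
      continuous_const).aestronglyMeasurable
    ?_ intervalIntegrable_const ?_
  · exact key.2
  · refine Filter.Eventually.of_forall fun ξ hξ τ hτ => ?_
    calc ‖fderiv ℝ ρ (τ, ξ) (1, 0)‖ ≤ ‖fderiv ℝ ρ (τ, ξ)‖ * ‖((1 : ℝ), (0 : ℝ))‖ :=
          (fderiv ℝ ρ (τ, ξ)).le_opNorm _
      _ ≤ |C| * 1 := by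
          refine mul_le_mul ((hC _ ⟨Metric.ball_subset_closedBall hτ,
            uIoc_subset_uIcc hξ⟩).trans (le_abs_self C)) ?_ (norm_nonneg _) (abs_nonneg _)
          simp [Prod.norm_def]
      _ = |C| := mul_one _
  · exact Filter.Eventually.of_forall fun ξ _ τ _ => hasDerivAt_slice_fst ρ hρ τ ξ

lemma moving_deriv (ρ : ℝ × ℝ → ℝ) (hρ : ContDiff ℝ 1 ρ) (b : ℝ → ℝ) (b' τ₀ : ℝ)
    (hb : HasDerivAt b b' τ₀) :
    HasDerivAt (fun τ => ∫ ξ in b τ₀..b τ, ρ (τ, ξ)) (ρ (τ₀, b τ₀) * b') τ₀ := by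
  have contρ : ∀ t : ℝ, Continuous fun ξ => ρ (t, ξ) := fun t =>
    hρ.continuous.comp (Continuous.prodMk_right t)
  -- FTC part
  have h1 : HasDerivAt (fun τ => ∫ ξ in b τ₀..b τ, ρ (τ₀, ξ)) (ρ (τ₀, b τ₀) * b') τ₀ := by
    have hQ : HasDerivAt (fun y => ∫ ξ in b τ₀..y, ρ (τ₀, ξ)) (ρ (τ₀, b τ₀)) (b τ₀) :=
      intervalIntegral.integral_hasDerivAt_right ((contρ τ₀).intervalIntegrable _ _)
        ((contρ τ₀).stronglyMeasurableAtFilter _ _) (contρ τ₀).continuousAt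
    exact HasDerivAt.comp τ₀ hQ hb
  -- error part
  have h2 : HasDerivAt (fun τ => ∫ ξ in b τ₀..b τ, (ρ (τ, ξ) - ρ (τ₀, ξ))) 0 τ₀ := by
    rw [hasDerivAt_iff_isLittleO]
    simp only [intervalIntegral.integral_same, sub_zero, smul_zero, sub_zero]
    -- Lipschitz bound on a compact convex neighborhood
    set K : Set (ℝ × ℝ) := Metric.closedBall τ₀ 1 ×ˢ Metric.closedBall (b τ₀) 1 with hK
    obtain ⟨C, hC⟩ := ((isCompact_closedBall τ₀ 1).prod
      (isCompact_closedBall (b τ₀) 1)).exists_bound_of_continuousOn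
      ((hρ.continuous_fderiv one_ne_zero).continuousOn (s := K))
    have hKconv : Convex ℝ K := (convex_closedBall _ _).prod (convex_closedBall _ _)
    have hbig : (fun τ => ∫ ξ in b τ₀..b τ, (ρ (τ, ξ) - ρ (τ₀, ξ)))
        =O[nhds τ₀] fun τ => (τ - τ₀) * (b τ - b τ₀) := by
      rw [isBigO_iff]
      refine ⟨|C|, ?_⟩
      have hev1 : ∀ᶠ τ in nhds τ₀, |τ - τ₀| ≤ 1 := by
        have := Metric.closedBall_mem_nhds τ₀ (one_pos)
        filter_upwards [this] with τ hτ using by simpa [Real.dist_eq] using hτ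
      have hev2 : ∀ᶠ τ in nhds τ₀, |b τ - b τ₀| ≤ 1 := by
        have hcb : ContinuousAt b τ₀ := hb.continuousAt
        have : Filter.Tendsto (fun τ => b τ - b τ₀) (nhds τ₀) (nhds (b τ₀ - b τ₀)) :=
          (hcb.sub continuousAt_const)
        rw [sub_self] at this
        filter_upwards [this (Metric.closedBall_mem_nhds 0 one_pos)] with τ hτ using by
          simpa [Real.dist_eq] using hτ
      filter_upwards [hev1, hev2] with τ hτ1 hτ2
      have hlip : ∀ ξ ∈ Set.uIoc (b τ₀) (b τ), ‖ρ (τ, ξ) - ρ (τ₀, ξ)‖ ≤ |C| * |τ - τ₀| := by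
        intro ξ hξ
        have hξK : ξ ∈ Metric.closedBall (b τ₀) 1 := by
          have : ξ ∈ uIcc (b τ₀) (b τ) := uIoc_subset_uIcc hξ
          have hsub : uIcc (b τ₀) (b τ) ⊆ Metric.closedBall (b τ₀) 1 := by
            rw [Real.closedBall_eq_Icc]
            exact Set.uIcc_subset_Icc ⟨by linarith [abs_nonneg (b τ₀ - b τ₀)], by
              simp⟩ ⟨by cases abs_le.mp hτ2 with | intro h1 h2 => linarith, by
              cases abs_le.mp hτ2 with | intro h1 h2 => linarith⟩
          exact hsub this
        have hmvt := Convex.norm_image_sub_le_of_norm_fderiv_le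
          (f := ρ) (s := K) (C := |C|)
          (fun p _ => (hρ.differentiable one_ne_zero).differentiableAt)
          (fun p hp => (hC p hp).trans (le_abs_self C)) hKconv
          (x := (τ₀, ξ)) (y := (τ, ξ))
          ⟨Metric.mem_closedBall_self one_pos.le, hξK⟩
          ⟨by simpa [Real.dist_eq, Metric.mem_closedBall] using hτ1, hξK⟩
        have : ‖((τ, ξ) : ℝ × ℝ) - (τ₀, ξ)‖ = |τ - τ₀| := by
          simp [Prod.norm_def, Prod.sub_def, Real.norm_eq_abs]
        rw [this] at hmvt
        exact hmvt
      calc ‖∫ ξ in b τ₀..b τ, (ρ (τ, ξ) - ρ (τ₀, ξ))‖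
            ≤ |C| * |τ - τ₀| * |b τ - b τ₀| :=
          intervalIntegral.norm_integral_le_of_norm_le_const hlip
        _ = |C| * ‖(τ - τ₀) * (b τ - b τ₀)‖ := by
            rw [Real.norm_eq_abs, abs_mul]; ring
    have hsmall : (fun τ => (τ - τ₀) * (b τ - b τ₀)) =o[nhds τ₀] fun τ => τ - τ₀ := by
      have ho : (fun τ => b τ - b τ₀) =o[nhds τ₀] (fun _ => (1 : ℝ)) := by
        rw [isLittleO_one_iff]
        have : Filter.Tendsto (fun τ => b τ - b τ₀) (nhds τ₀) (nhds (b τ₀ - b τ₀)) :=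
          (hb.continuousAt.sub continuousAt_const)
        simpa using this
      have := (isBigO_refl (fun τ : ℝ => τ - τ₀) (nhds τ₀)).mul_isLittleO ho
      simpa using this
    exact hbig.trans_isLittleO hsmall
  -- combine
  have heq : (fun τ => ∫ ξ in b τ₀..b τ, ρ (τ, ξ)) =
      fun τ => (∫ ξ in b τ₀..b τ, ρ (τ₀, ξ)) + ∫ ξ in b τ₀..b τ, (ρ (τ, ξ) - ρ (τ₀, ξ)) := by
    funext τ
    rw [intervalIntegral.integral_sub ((contρ τ).intervalIntegrable _ _)
      ((contρ τ₀).intervalIntegrable _ _)]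
    ring
  rw [heq]
  simpa using h1.fun_add h2

/-- Conservation of probability along the Bohmian flow.
If ρ, j are C^1, ρ > 0, the continuity equation ∂_t ρ + ∂_x j = 0 holds,
and X τ s x₀ is the x-coordinate at time τ of the trajectory of
ẋ = (j/ρ)(t,x) passing through (s, x₀), then the probability content of a
transported interval is conserved between time slices. -/
theorem bohmian_probability_conservation
    (ρ j : ℝ × ℝ → ℝ)
    (hρ : ContDiff ℝ 1 ρ) (hj : ContDiff ℝ 1 j)
    (hρpos : ∀ p, 0 < ρ p)
    (hcont : ∀ p : ℝ × ℝ, fderiv ℝ ρ p (1, 0) + fderiv ℝ j p (0, 1) = 0)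
    (X : ℝ → ℝ → ℝ → ℝ)
    (hXinit : ∀ s x₀, X s s x₀ = x₀)
    (hXode : ∀ s x₀ τ, HasDerivAt (fun τ' => X τ' s x₀)
      (j (τ, X τ s x₀) / ρ (τ, X τ s x₀)) τ) :
    ∀ (τ s : ℝ) (c d : ℝ), c ≤ d →
      (∫ ξ in (X τ s c)..(X τ s d), ρ (τ, ξ)) = ∫ ξ in c..d, ρ (s, ξ) := by
  intro τ s c d _
  have contρ : ∀ t : ℝ, Continuous fun ξ => ρ (t, ξ) := fun t =>
    hρ.continuous.comp (Continuous.prodMk_right t)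
  set a : ℝ → ℝ := fun τ' => X τ' s c with ha
  set b : ℝ → ℝ := fun τ' => X τ' s d with hbdef
  set g : ℝ → ℝ := fun τ' => ∫ ξ in a τ'..b τ', ρ (τ', ξ) with hg
  have key : ∀ τ₀ : ℝ, HasDerivAt g 0 τ₀ := by
    intro τ₀
    -- the three pieces
    have d1 : HasDerivAt (fun τ' => ∫ ξ in a τ₀..a τ', ρ (τ', ξ)) (j (τ₀, a τ₀)) τ₀ := by
      have := moving_deriv ρ hρ a (j (τ₀, a τ₀) / ρ (τ₀, a τ₀)) τ₀ (hXode s c τ₀)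
      rwa [mul_div_cancel₀ _ (hρpos (τ₀, a τ₀)).ne'] at this
    have d3 : HasDerivAt (fun τ' => ∫ ξ in b τ₀..b τ', ρ (τ', ξ)) (j (τ₀, b τ₀)) τ₀ := by
      have := moving_deriv ρ hρ b (j (τ₀, b τ₀) / ρ (τ₀, b τ₀)) τ₀ (hXode s d τ₀)
      rwa [mul_div_cancel₀ _ (hρpos (τ₀, b τ₀)).ne'] at this
    have d2 : HasDerivAt (fun τ' => ∫ ξ in a τ₀..b τ₀, ρ (τ', ξ))
        (j (τ₀, a τ₀) - j (τ₀, b τ₀)) τ₀ := by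
      have h := param_deriv ρ hρ (a τ₀) (b τ₀) τ₀
      have hval : (∫ ξ in a τ₀..b τ₀, fderiv ℝ ρ (τ₀, ξ) (1, 0))
          = j (τ₀, a τ₀) - j (τ₀, b τ₀) := by
        have hrw : ∀ ξ : ℝ, fderiv ℝ ρ (τ₀, ξ) (1, 0) = -(fderiv ℝ j (τ₀, ξ) (0, 1)) := by
          intro ξ; have := hcont (τ₀, ξ); linarith
        rw [intervalIntegral.integral_congr (g := fun ξ => -(fderiv ℝ j (τ₀, ξ) (0, 1)))
          (fun ξ _ => hrw ξ), intervalIntegral.integral_neg,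
          intervalIntegral.integral_eq_sub_of_hasDerivAt
            (fun ξ _ => hasDerivAt_slice_snd j hj τ₀ ξ)
            ((((hj.continuous_fderiv one_ne_zero).comp (Continuous.prodMk_right τ₀)).clm_apply
              continuous_const).intervalIntegrable _ _)]
        ring
      rwa [hval] at h
    have heq : g =ᶠ[nhds τ₀] fun τ' =>
        ((∫ ξ in a τ₀..b τ₀, ρ (τ', ξ)) + ∫ ξ in b τ₀..b τ', ρ (τ', ξ))
          - ∫ ξ in a τ₀..a τ', ρ (τ', ξ) := by
      refine Filter.Eventually.of_forall fun τ' => ?_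
      have i1 : IntervalIntegrable (fun ξ => ρ (τ', ξ)) volume (a τ') (a τ₀) :=
        (contρ τ').intervalIntegrable _ _
      have i2 : IntervalIntegrable (fun ξ => ρ (τ', ξ)) volume (a τ₀) (b τ₀) :=
        (contρ τ').intervalIntegrable _ _
      have i3 : IntervalIntegrable (fun ξ => ρ (τ', ξ)) volume (b τ₀) (b τ') :=
        (contρ τ').intervalIntegrable _ _
      have e1 := intervalIntegral.integral_add_adjacent_intervals i1 (i2.trans i3)
      have e2 := intervalIntegral.integral_add_adjacent_intervals i2 i3
      have e3 : (∫ ξ in a τ'..a τ₀, ρ (τ', ξ)) = -∫ ξ in a τ₀..a τ', ρ (τ', ξ) :=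
        intervalIntegral.integral_symm _ _
      simp only [hg]
      rw [← e1, ← e2, e3]; ring
    have hcomb : HasDerivAt (fun τ' =>
        ((∫ ξ in a τ₀..b τ₀, ρ (τ', ξ)) + ∫ ξ in b τ₀..b τ', ρ (τ', ξ))
          - ∫ ξ in a τ₀..a τ', ρ (τ', ξ))
        ((j (τ₀, a τ₀) - j (τ₀, b τ₀)) + j (τ₀, b τ₀) - j (τ₀, a τ₀)) τ₀ :=
      (d2.add d3).sub d1
    have : HasDerivAt g ((j (τ₀, a τ₀) - j (τ₀, b τ₀)) + j (τ₀, b τ₀) - j (τ₀, a τ₀)) τ₀ :=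
      hcomb.congr_of_eventuallyEq heq
    simpa using this
  have hconst := is_const_of_deriv_eq_zero (𝕜 := ℝ) (f := g)
    (fun x => (key x).differentiableAt) (fun x => (key x).deriv)
  have := hconst τ s
  simp only [hg, ha, hbdef] at this ⊢
  rw [this, hXinit, hXinit]
end

section
/- Let ρ, j be C^1 on ℝ² with ρ > 0, satisfying ∂_t ρ + ∂_x j = 0, with complete Bohmian flow. Fix a ∈ ℝ and let X₀(t,a) denote the x-coordinate at time 0 of the trajectory through (t,a). Then for all t ≥ 0: ∫_{X₀(t,a)}^{a'} ρ(0,ξ) dξ = ∫_0^t j(s,a) ds, where a' = X₀(0,a) = a. Equivalently, ∫_{X₀(t,a)}^{a} ρ(0,ξ) dξ = ∫_0^t j(s,a) ds. -/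
open Set MeasureTheory intervalIntegral

section Aux

variable {ρ j : ℝ × ℝ → ℝ}

/-- time-slice derivative of ρ -/
lemma aux_hasDerivAt_time (hρ : ContDiff ℝ 1 ρ) (s ξ : ℝ) :
    HasDerivAt (fun s => ρ (s, ξ)) (fderiv ℝ ρ (s, ξ) (1, 0)) s := by
  have h1 : HasDerivAt (fun s : ℝ => (s, ξ)) ((1 : ℝ), (0 : ℝ)) s :=
    (hasDerivAt_id s).prodMk (hasDerivAt_const s ξ)
  exact ((hρ.differentiable one_ne_zero (s, ξ)).hasFDerivAt).comp_hasDerivAt s h1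

/-- space-slice derivative of j -/
lemma aux_hasDerivAt_space (hj : ContDiff ℝ 1 j) (s ξ : ℝ) :
    HasDerivAt (fun ξ => j (s, ξ)) (fderiv ℝ j (s, ξ) (0, 1)) ξ := by
  have h1 : HasDerivAt (fun ξ : ℝ => (s, ξ)) ((0 : ℝ), (1 : ℝ)) ξ :=
    (hasDerivAt_const ξ s).prodMk (hasDerivAt_id ξ)
  exact ((hj.differentiable one_ne_zero (s, ξ)).hasFDerivAt).comp_hasDerivAt ξ h1

end Aux

/-- Stokes' theorem for the closed current form J = ρ dx − j dt:
with X₀(t,a) the time-0 x-coordinate of the Bohmian trajectory through (t,a),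
∫_{X₀(t,a)}^{a} ρ(0,ξ) dξ = ∫_0^t j(s,a) ds for all t ≥ 0. -/
theorem bohmian_stokes_endpoint
    (ρ j : ℝ × ℝ → ℝ)
    (hρ : ContDiff ℝ 1 ρ) (hj : ContDiff ℝ 1 j)
    (hρpos : ∀ p, 0 < ρ p)
    (hcont : ∀ p : ℝ × ℝ, fderiv ℝ ρ p (1, 0) + fderiv ℝ j p (0, 1) = 0)
    (F : ℝ → ℝ × ℝ → ℝ × ℝ)
    (hF0 : ∀ p, F 0 p = p)
    (hFgroup : ∀ r s p, F r (F s p) = F (r + s) p)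
    (hFode : ∀ (p : ℝ × ℝ) (s : ℝ),
      HasDerivAt (fun τ => F τ p) ((1 : ℝ), j (F s p) / ρ (F s p)) s)
    (X₀ : ℝ → ℝ → ℝ)
    (hX₀ : ∀ t a, X₀ t a = (F (-t) (t, a)).2) :
    ∀ (a : ℝ) (t : ℝ), 0 ≤ t →
      (∫ ξ in (X₀ t a)..a, ρ (0, ξ)) = ∫ s in (0:ℝ)..t, j (s, a) := by
  intro a t _ht
  set p : ℝ × ℝ := (t, a) with hp
  -- continuity facts
  have cρ : Continuous ρ := hρ.continuous
  have cj : Continuous j := hj.continuous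
  have cDρ : Continuous fun q : ℝ × ℝ => fderiv ℝ ρ q (1, 0) :=
    (hρ.continuous_fderiv one_ne_zero).clm_apply continuous_const
  have cDj : Continuous fun q : ℝ × ℝ => fderiv ℝ j q (0, 1) :=
    (hj.continuous_fderiv one_ne_zero).clm_apply continuous_const
  -- first coordinate of the flow
  have hfst : ∀ σ : ℝ, (F σ p).1 = t + σ := by
    have hd : ∀ σ : ℝ, HasDerivAt (fun τ => (F τ p).1 - τ) 0 σ := by
      intro σ
      have h1 : HasDerivAt (fun τ => (F τ p).1) 1 σ := by
        have := ((ContinuousLinearMap.fst ℝ ℝ ℝ).hasFDerivAt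
          (x := F σ p)).comp_hasDerivAt σ (hFode p σ)
        simpa [Function.comp_def] using this
      simpa using h1.fun_sub (hasDerivAt_id σ)
    have hconst : ∀ σ : ℝ, (F σ p).1 - σ = (F 0 p).1 - 0 := by
      intro σ
      have := is_const_of_deriv_eq_zero (f := fun τ => (F τ p).1 - τ)
        (fun x => (hd x).differentiableAt) (fun x => (hd x).deriv) σ 0
      simpa using this
    intro σ
    have := hconst σ
    rw [hF0 p] at this
    simp only [hp] at this ⊢
    linarith
  -- the trajectory through (t,a), parametrized by absolute time
  set X : ℝ → ℝ := fun s => (F (s - t) p).2 with hX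
  have hFX : ∀ s : ℝ, F (s - t) p = (s, X s) := by
    intro s
    have h1 : (F (s - t) p).1 = s := by rw [hfst]; ring
    exact Prod.ext h1 rfl
  have hXt : X t = a := by simp [hX, hF0, hp]
  have hX0 : X 0 = X₀ t a := by
    rw [hX₀]; simp [hX, hp]
  have hD : ∀ s : ℝ, HasDerivAt X (j (s, X s) / ρ (s, X s)) s := by
    intro s
    have h2 : HasDerivAt (fun τ => (F τ p).2) (j (F (s - t) p) / ρ (F (s - t) p)) (s - t) := by
      have := ((ContinuousLinearMap.snd ℝ ℝ ℝ).hasFDerivAt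
        (x := F (s - t) p)).comp_hasDerivAt (s - t) (hFode p (s - t))
      simpa [Function.comp_def] using this
    have h3 : HasDerivAt (fun s : ℝ => s - t) 1 s := by
      simpa using (hasDerivAt_id s).sub_const t
    have h4 := HasDerivAt.comp s h2 h3
    have h5 : HasDerivAt (fun s : ℝ => (F (s - t) p).2) (j (s, X s) / ρ (s, X s)) s := by
      simpa [Function.comp_def, hFX s] using h4
    exact h5
  have cja : ∀ y : ℝ, Continuous fun σ : ℝ => j (σ, y) := fun y =>
    cj.comp (continuous_id.prodMk continuous_const)
  have cX : Continuous X := by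
    rw [continuous_iff_continuousAt]
    exact fun s => (hD s).continuousAt
  -- derivative of the parametric integral in the time variable
  have hpsi : ∀ (x s₀ : ℝ),
      HasDerivAt (fun s => ∫ ξ in a..x, ρ (s, ξ)) (j (s₀, a) - j (s₀, x)) s₀ := by
    intro x s₀
    -- bound on the time derivative of ρ near s₀
    obtain ⟨C, hC⟩ : ∃ C, ∀ q ∈ Icc (s₀ - 1) (s₀ + 1) ×ˢ uIcc a x,
        ‖fderiv ℝ ρ q (1, 0)‖ ≤ C :=
      (isCompact_Icc.prod isCompact_uIcc).exists_bound_of_continuousOn cDρ.continuousOn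
    have key := intervalIntegral.hasDerivAt_integral_of_dominated_loc_of_deriv_le
      (F := fun s ξ => ρ (s, ξ)) (F' := fun s ξ => fderiv ℝ ρ (s, ξ) (1, 0))
      (x₀ := s₀) (a := a) (b := x) (μ := volume) (bound := fun _ => C)
      (s := Metric.ball s₀ 1) (Metric.ball_mem_nhds s₀ (by norm_num : (0:ℝ) < 1))
      (Filter.Eventually.of_forall fun s =>
        ((cρ.comp (continuous_const.prodMk continuous_id)).aestronglyMeasurable))
      ((cρ.comp (continuous_const.prodMk continuous_id)).intervalIntegrable a x)
      ((cDρ.comp (continuous_const.prodMk continuous_id)).aestronglyMeasurable)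
      (Filter.Eventually.of_forall ?_)
      (intervalIntegrable_const)
      (Filter.Eventually.of_forall ?_)
    · have heq : (∫ ξ in a..x, fderiv ℝ ρ (s₀, ξ) (1, 0)) = j (s₀, a) - j (s₀, x) := by
        have h1 : ∀ ξ : ℝ, fderiv ℝ ρ (s₀, ξ) (1, 0) = -(fderiv ℝ j (s₀, ξ) (0, 1)) := by
          intro ξ; have := hcont (s₀, ξ); linarith
        rw [intervalIntegral.integral_congr (g := fun ξ => -(fderiv ℝ j (s₀, ξ) (0, 1)))
          (fun ξ _ => h1 ξ), intervalIntegral.integral_neg]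
        have h2 : (∫ ξ in a..x, fderiv ℝ j (s₀, ξ) (0, 1)) = j (s₀, x) - j (s₀, a) :=
          intervalIntegral.integral_eq_sub_of_hasDerivAt
            (fun ξ _ => aux_hasDerivAt_space hj s₀ ξ)
            ((cDj.comp (continuous_const.prodMk continuous_id)).intervalIntegrable a x)
        rw [h2]; ring
      rw [heq] at key
      exact key.2
    · -- bound
      intro ξ hξ s hs
      have hs' : |s - s₀| < 1 := by simpa [Real.dist_eq] using hs
      rcases abs_lt.1 hs' with ⟨hu, hv⟩
      have h1 : s ∈ Icc (s₀ - 1) (s₀ + 1) := ⟨by linarith, by linarith⟩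
      have h2 : ξ ∈ uIcc a x := Set.mem_Icc_of_Ioc hξ
      exact hC (s, ξ) ⟨h1, h2⟩
    · intro ξ _ s _
      exact aux_hasDerivAt_time hρ s ξ
  -- key integral identity
  have hkey : ∀ (x s s₀ : ℝ),
      (∫ ξ in a..x, ρ (s, ξ)) - (∫ ξ in a..x, ρ (s₀, ξ))
        = ∫ σ in s₀..s, (j (σ, a) - j (σ, x)) := by
    intro x s s₀
    have := intervalIntegral.integral_eq_sub_of_hasDerivAt
      (f := fun s => ∫ ξ in a..x, ρ (s, ξ))
      (f' := fun σ => j (σ, a) - j (σ, x)) (a := s₀) (b := s)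
      (fun σ _ => hpsi x σ)
      (((cja a).sub (cja x)).intervalIntegrable s₀ s)
    linarith [this]
  -- Φ and its derivative
  set Φ : ℝ → ℝ := fun s => ∫ ξ in a..(X s), ρ (s, ξ) with hΦ
  have hΦ' : ∀ s₀ : ℝ, HasDerivAt Φ (j (s₀, a)) s₀ := by
    intro s₀
    set L : ℝ := j (s₀, a) - j (s₀, X s₀) with hL
    -- f part: frozen time
    have hf : HasDerivAt (fun s => ∫ ξ in a..(X s), ρ (s₀, ξ)) (j (s₀, X s₀)) s₀ := by
      have h1 : HasStrictDerivAt (fun y => ∫ ξ in a..y, ρ (s₀, ξ)) (ρ (s₀, X s₀)) (X s₀) :=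
        (cρ.comp (continuous_const.prodMk continuous_id)).integral_hasStrictDerivAt a (X s₀)
      have h2 := HasDerivAt.comp s₀ h1.hasDerivAt (hD s₀)
      have h3 : ρ (s₀, X s₀) * (j (s₀, X s₀) / ρ (s₀, X s₀)) = j (s₀, X s₀) := by
        field_simp [(hρpos (s₀, X s₀)).ne']
      rwa [h3] at h2
    -- g part: the correction term
    have hg : HasDerivAt (fun s => Φ s - ∫ ξ in a..(X s), ρ (s₀, ξ)) L s₀ := by
      rw [hasDerivAt_iff_isLittleO]
      rw [Asymptotics.isLittleO_iff]
      intro c hc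
      -- continuity of the error function
      have hcont2 : ContinuousAt (fun q : ℝ × ℝ => (j (q.1, a) - j (q.1, X q.2)) - L)
          (s₀, s₀) := by
        apply ContinuousAt.sub _ continuousAt_const
        apply ContinuousAt.sub
        · exact (cj.comp (continuous_fst.prodMk continuous_const)).continuousAt
        · exact (cj.comp (continuous_fst.prodMk (cX.comp continuous_snd))).continuousAt
      have h0 : (fun q : ℝ × ℝ => (j (q.1, a) - j (q.1, X q.2)) - L) (s₀, s₀) = 0 := by
        simp [hL]
      rw [Metric.continuousAt_iff] at hcont2
      obtain ⟨δ, hδ, hδ'⟩ := hcont2 c hc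
      rw [Filter.eventually_iff_exists_mem]
      refine ⟨Metric.ball s₀ (δ / 2), Metric.ball_mem_nhds s₀ (by linarith), ?_⟩
      intro s hs
      have hsd : |s - s₀| < δ / 2 := by simpa [Real.dist_eq] using hs
      -- the integral form of g
      have hgs : (Φ s - ∫ ξ in a..(X s), ρ (s₀, ξ)) - (Φ s₀ - ∫ ξ in a..(X s₀), ρ (s₀, ξ))
          - (s - s₀) • L = ∫ σ in s₀..s, ((j (σ, a) - j (σ, X s)) - L) := by
        have e1 : Φ s - (∫ ξ in a..(X s), ρ (s₀, ξ)) = ∫ σ in s₀..s, (j (σ, a) - j (σ, X s)) :=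
          hkey (X s) s s₀
        have e2 : Φ s₀ - (∫ ξ in a..(X s₀), ρ (s₀, ξ)) = 0 := by
          simp [hΦ]
        have e3 : (∫ σ in s₀..s, ((j (σ, a) - j (σ, X s)) - L))
            = (∫ σ in s₀..s, (j (σ, a) - j (σ, X s))) - (s - s₀) • L := by
          rw [intervalIntegral.integral_sub (f := fun σ => j (σ, a) - j (σ, X s))
            (((cja a).sub (cja (X s))).intervalIntegrable s₀ s)
            intervalIntegrable_const]
          congr 1
          rw [intervalIntegral.integral_const]
        rw [e1, e2, e3]; ring
      rw [hgs]
      have hb : ∀ σ ∈ Set.uIoc s₀ s, ‖(j (σ, a) - j (σ, X s)) - L‖ ≤ c := by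
        intro σ hσ
        have hσ' : |σ - s₀| ≤ |s - s₀| := by
          rcases Set.mem_Ioc.1 hσ with ⟨h1, h2⟩
          rw [abs_le]
          constructor <;> rcases le_total s₀ s with h | h <;>
            simp [min_def, max_def] at h1 h2 <;>
            rcases abs_cases (s - s₀) with ⟨he, _⟩ | ⟨he, _⟩ <;> split_ifs at h1 h2 <;> linarith
        have hdist : dist ((σ, s) : ℝ × ℝ) (s₀, s₀) < δ := by
          rw [Prod.dist_eq]
          simp only [Real.dist_eq]
          apply max_lt <;> [linarith [hσ'.trans_lt hsd]; linarith]
        have h2 := hδ' hdist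
        have h3 : j (((s₀ : ℝ), (s₀ : ℝ)).1, a) - j ((s₀, s₀).1, X (s₀, s₀).2) - L = 0 := by
          simp [hL]
        rw [h3, dist_zero_right] at h2
        simpa using le_of_lt h2
      calc ‖∫ σ in s₀..s, ((j (σ, a) - j (σ, X s)) - L)‖
          ≤ c * |s - s₀| := intervalIntegral.norm_integral_le_of_norm_le_const hb
        _ = c * ‖s - s₀‖ := by rw [Real.norm_eq_abs]
    have := hf.fun_add hg
    have heq : (fun s => (∫ ξ in a..(X s), ρ (s₀, ξ)) + (Φ s - ∫ ξ in a..(X s), ρ (s₀, ξ)))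
        = Φ := by funext s; ring
    rw [heq] at this
    have : HasDerivAt Φ (j (s₀, X s₀) + L) s₀ := this
    simpa [hL] using this
  -- the conserved quantity W
  set W : ℝ → ℝ := fun s => Φ s - ∫ σ in (0:ℝ)..s, j (σ, a) with hW
  have hW' : ∀ s : ℝ, HasDerivAt W 0 s := by
    intro s
    have h1 : HasDerivAt (fun s => ∫ σ in (0:ℝ)..s, j (σ, a)) (j (s, a)) s :=
      ((cja a).integral_hasStrictDerivAt 0 s).hasDerivAt
    simpa using (hΦ' s).fun_sub h1
  have hWconst : W t = W 0 :=
    is_const_of_deriv_eq_zero (fun s => (hW' s).differentiableAt)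
      (fun s => (hW' s).deriv) t 0
  have hWt : W t = -∫ σ in (0:ℝ)..t, j (σ, a) := by
    simp [hW, hΦ, hXt]
  have hW0 : W 0 = ∫ ξ in a..(X₀ t a), ρ (0, ξ) := by
    simp [hW, hΦ, hX0]
  rw [hWt, hW0] at hWconst
  rw [intervalIntegral.integral_symm a (X₀ t a)]
  linarith
end

section
/- Main proposition (point detector): Let ρ, j be C^1 on ℝ² with ρ > 0, satisfying ∂_t ρ + ∂_x j = 0, with complete Bohmian flow, and ∫ℝ ρ(0,ξ)dξ = 1. For a ∈ ℝ let D = {(t,a) : t ≥ 0} and f_a(s) = ∫_0^s j(t,a) dt. Then the detection probability satisfies, for all τ ≥ 0: P(τ) = max{f_a(s) : 0 ≤ s ≤ τ} + max{−f_a(s) : 0 ≤ s ≤ τ}, where P(τ) = ∫_{𝒳₀(D_τ)} ρ(0,ξ) dξ with D_τ = {(t,a) : 0 ≤ t ≤ τ}. -/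
open Set MeasureTheory intervalIntegral Metric

lemma slice_t (g : ℝ × ℝ → ℝ) (hg : ContDiff ℝ 1 g) (ξ s : ℝ) :
    HasDerivAt (fun s => g (s, ξ)) (fderiv ℝ g (s, ξ) (1, 0)) s := by
  have h1 : HasDerivAt (fun s : ℝ => (s, ξ)) ((1 : ℝ), (0 : ℝ)) s :=
    (hasDerivAt_id s).prodMk (hasDerivAt_const s ξ)
  exact (HasFDerivAt.comp_hasDerivAt s
    ((hg.differentiable one_ne_zero (s, ξ)).hasFDerivAt) h1)

lemma slice_x (g : ℝ × ℝ → ℝ) (hg : ContDiff ℝ 1 g) (s ξ : ℝ) :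
    HasDerivAt (fun ξ => g (s, ξ)) (fderiv ℝ g (s, ξ) (0, 1)) ξ := by
  have h1 : HasDerivAt (fun ξ : ℝ => (s, ξ)) ((0 : ℝ), (1 : ℝ)) ξ :=
    (hasDerivAt_const ξ s).prodMk (hasDerivAt_id ξ)
  exact (HasFDerivAt.comp_hasDerivAt ξ
    ((hg.differentiable one_ne_zero (s, ξ)).hasFDerivAt) h1)

lemma ftc_x (g : ℝ × ℝ → ℝ) (hg : ContDiff ℝ 1 g) (s a y : ℝ) :
    (∫ ξ in a..y, fderiv ℝ g (s, ξ) (0, 1)) = g (s, y) - g (s, a) := by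
  apply intervalIntegral.integral_eq_sub_of_hasDerivAt
  · exact fun ξ _ => slice_x g hg s ξ
  · apply Continuous.intervalIntegrable
    exact ((hg.continuous_fderiv one_ne_zero).comp
      (continuous_const.prodMk continuous_id)).clm_apply continuous_const

lemma param_deriv_s9 (g : ℝ × ℝ → ℝ) (hg : ContDiff ℝ 1 g) (a y₀ s₀ : ℝ) :
    HasDerivAt (fun s => ∫ ξ in a..y₀, g (s, ξ))
      (∫ ξ in a..y₀, fderiv ℝ g (s₀, ξ) (1, 0)) s₀ := by
  have hgc : Continuous g := hg.continuous
  have hder : Continuous fun q : ℝ × ℝ => fderiv ℝ g q (1, 0) :=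
    (hg.continuous_fderiv one_ne_zero).clm_apply continuous_const
  -- bound on compact set
  have hK : IsCompact ((Icc (s₀ - 1) (s₀ + 1)) ×ˢ (uIcc a y₀)) :=
    isCompact_Icc.prod isCompact_uIcc
  obtain ⟨C, hC⟩ := hK.exists_bound_of_continuousOn hder.continuousOn
  have main := intervalIntegral.hasDerivAt_integral_of_dominated_loc_of_deriv_le
    (F := fun s ξ => g (s, ξ)) (F' := fun s ξ => fderiv ℝ g (s, ξ) (1, 0))
    (x₀ := s₀) (bound := fun _ => C) (a := a) (b := y₀) (μ := volume)
    (Metric.ball_mem_nhds s₀ (by norm_num : (0:ℝ) < 1))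
    (Filter.Eventually.of_forall fun s =>
      ((hgc.comp (continuous_const.prodMk continuous_id)).aestronglyMeasurable))
    ((hgc.comp (continuous_const.prodMk continuous_id)).intervalIntegrable _ _)
    ((hder.comp (continuous_const.prodMk continuous_id)).aestronglyMeasurable)
    (ae_of_all _ fun ξ hξ s hs => by
      refine hC (s, ξ) ⟨?_, uIoc_subset_uIcc hξ⟩
      have := mem_ball_iff_norm.mp hs
      constructor <;> [linarith [abs_le.mp (le_of_lt (by simpa [Real.norm_eq_abs] using this))] ;
        linarith [abs_le.mp (le_of_lt (by simpa [Real.norm_eq_abs] using this))]])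
    (intervalIntegrable_const)
    (ae_of_all _ fun ξ hξ s hs => slice_t g hg ξ s)
  exact main.2

lemma part2 (g : ℝ × ℝ → ℝ) (hg : Continuous g) (p₀ : ℝ × ℝ) :
    HasFDerivAt (fun p : ℝ × ℝ => ∫ ξ in p₀.2..p.2, g (p.1, ξ))
      ((g p₀) • (ContinuousLinearMap.snd ℝ ℝ ℝ)) p₀ := by
  rw [hasFDerivAt_iff_isLittleO_nhds_zero]
  rw [Asymptotics.isLittleO_iff]
  intro c hc
  obtain ⟨δ, hδ, hcont⟩ := Metric.continuousAt_iff.mp (hg.continuousAt (x := p₀)) c hc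
  filter_upwards [Metric.ball_mem_nhds 0 hδ] with h hh
  have hh' : ‖h‖ < δ := by simpa using mem_ball_iff_norm.mp hh
  have h1 : |h.1| ≤ ‖h‖ := by simpa [Real.norm_eq_abs] using norm_fst_le h
  have h2 : |h.2| ≤ ‖h‖ := by simpa [Real.norm_eq_abs] using norm_snd_le h
  have key : (∫ ξ in p₀.2..(p₀ + h).2, g ((p₀ + h).1, ξ))
      - (∫ ξ in p₀.2..p₀.2, g (p₀.1, ξ))
      - ((g p₀) • (ContinuousLinearMap.snd ℝ ℝ ℝ)) h
      = ∫ ξ in p₀.2..(p₀.2 + h.2), (g ((p₀.1 + h.1), ξ) - g p₀) := by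
    rw [intervalIntegral.integral_same, intervalIntegral.integral_sub]
    · simp [intervalIntegral.integral_const, Prod.fst_add, Prod.snd_add]
      ring
    · exact ((hg.comp (continuous_const.prodMk continuous_id)).intervalIntegrable _ _)
    · exact intervalIntegrable_const
  simp only [Prod.fst_add, Prod.snd_add] at key ⊢
  rw [key]
  have bnd : ‖∫ ξ in p₀.2..(p₀.2 + h.2), (g ((p₀.1 + h.1), ξ) - g p₀)‖ ≤ c * |p₀.2 + h.2 - p₀.2| := by
    apply intervalIntegral.norm_integral_le_of_norm_le_const
    intro ξ hξ
    have hξ' : |ξ - p₀.2| ≤ |h.2| := by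
      rcases le_total p₀.2 (p₀.2 + h.2) with hle | hle
      · rw [uIoc_of_le hle] at hξ
        rw [abs_le]; constructor <;> [linarith [hξ.1, abs_nonneg h.2] ; linarith [hξ.2, le_abs_self h.2]]
      · rw [uIoc_of_ge hle] at hξ
        rw [abs_le]; constructor <;> [linarith [hξ.1, neg_abs_le h.2] ; linarith [hξ.2, abs_nonneg h.2]]
    have : dist ((p₀.1 + h.1), ξ) p₀ < δ := by
      rw [Prod.dist_eq]
      apply max_lt
      · simpa [Real.dist_eq] using lt_of_le_of_lt h1 hh'
      · simpa [Real.dist_eq] using lt_of_le_of_lt (hξ'.trans h2) hh'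
    exact le_of_lt (by simpa [Real.norm_eq_abs, Real.dist_eq] using hcont this)
  calc ‖∫ ξ in p₀.2..(p₀.2 + h.2), (g ((p₀.1 + h.1), ξ) - g p₀)‖
      ≤ c * |p₀.2 + h.2 - p₀.2| := bnd
    _ = c * |h.2| := by ring_nf
    _ ≤ c * ‖h‖ := by nlinarith [h2, norm_nonneg h]

lemma joint (g : ℝ × ℝ → ℝ) (hg : ContDiff ℝ 1 g) (a : ℝ) (p₀ : ℝ × ℝ) :
    HasFDerivAt (fun p : ℝ × ℝ => ∫ ξ in a..p.2, g (p.1, ξ))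
      ((∫ ξ in a..p₀.2, fderiv ℝ g (p₀.1, ξ) (1, 0)) • (ContinuousLinearMap.fst ℝ ℝ ℝ)
        + (g p₀) • (ContinuousLinearMap.snd ℝ ℝ ℝ)) p₀ := by
  have heq : (fun p : ℝ × ℝ => ∫ ξ in a..p.2, g (p.1, ξ))
      = fun p : ℝ × ℝ => (∫ ξ in a..p₀.2, g (p.1, ξ)) + (∫ ξ in p₀.2..p.2, g (p.1, ξ)) := by
    funext p
    rw [intervalIntegral.integral_add_adjacent_intervals] <;>
      exact ((hg.continuous.comp (continuous_const.prodMk continuous_id)).intervalIntegrable _ _)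
  rw [heq]
  apply HasFDerivAt.add
  · have h1 : HasDerivAt (fun s => ∫ ξ in a..p₀.2, g (s, ξ))
        (∫ ξ in a..p₀.2, fderiv ℝ g (p₀.1, ξ) (1, 0)) p₀.1 := param_deriv_s9 g hg a p₀.2 p₀.1
    exact h1.comp_hasFDerivAt p₀ (hasFDerivAt_fst)
  · exact part2 g hg.continuous p₀

lemma F_fst (ρ j : ℝ × ℝ → ℝ) (F : ℝ → ℝ × ℝ → ℝ × ℝ) (hF0 : ∀ p, F 0 p = p)
    (hFode : ∀ (p : ℝ × ℝ) (s : ℝ),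
      HasDerivAt (fun τ => F τ p) ((1 : ℝ), j (F s p) / ρ (F s p)) s)
    (p : ℝ × ℝ) (s : ℝ) : (F s p).1 = p.1 + s := by
  have hd : ∀ σ, HasDerivAt (fun σ => (F σ p).1 - (p.1 + σ)) 0 σ := by
    intro σ
    have h1 : HasDerivAt (fun σ => (F σ p).1) 1 σ := by
      have := HasFDerivAt.comp_hasDerivAt σ
        (ContinuousLinearMap.hasFDerivAt (ContinuousLinearMap.fst ℝ ℝ ℝ)) (hFode p σ)
      simpa [Function.comp_def] using this
    have h2 : HasDerivAt (fun σ : ℝ => p.1 + σ) 1 σ := by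
      simpa using (hasDerivAt_const σ p.1).fun_add (hasDerivAt_id σ)
    simpa using h1.fun_sub h2
  have hc := is_const_of_deriv_eq_zero (fun σ => (hd σ).differentiableAt)
    (fun σ => (hd σ).deriv) s 0
  simp [hF0 p] at hc
  linarith

lemma conservation
    (ρ j : ℝ × ℝ → ℝ) (hρ : ContDiff ℝ 1 ρ) (hj : ContDiff ℝ 1 j)
    (hρpos : ∀ p, 0 < ρ p)
    (hcont : ∀ p : ℝ × ℝ, fderiv ℝ ρ p (1, 0) + fderiv ℝ j p (0, 1) = 0)
    (F : ℝ → ℝ × ℝ → ℝ × ℝ) (hF0 : ∀ p, F 0 p = p)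
    (hFode : ∀ (p : ℝ × ℝ) (s : ℝ),
      HasDerivAt (fun τ => F τ p) ((1 : ℝ), j (F s p) / ρ (F s p)) s)
    (a t : ℝ) :
    (∫ ξ in a..(F (-t) (t, a)).2, ρ (0, ξ)) = -(∫ r in (0:ℝ)..t, j (r, a)) := by
  set x : ℝ → ℝ := fun s => (F (s - t) (t, a)).2 with hx
  have hpt : ∀ s, F (s - t) (t, a) = (s, x s) := by
    intro s
    have h1 : (F (s - t) (t, a)).1 = s := by
      rw [F_fst ρ j F hF0 hFode]; ring
    exact Prod.ext h1 rfl
  have hxd : ∀ s, HasDerivAt x (j (s, x s) / ρ (s, x s)) s := by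
    intro s
    have h0 : HasDerivAt (fun τ => F τ (t, a))
        ((1 : ℝ), j (F (s - t) (t, a)) / ρ (F (s - t) (t, a))) (s - t) := hFode (t, a) (s - t)
    have hsub : HasDerivAt (fun σ : ℝ => σ - t) 1 s := (hasDerivAt_id s).sub_const t
    have hcomp := HasDerivAt.scomp s h0 hsub
    have hsnd := HasFDerivAt.comp_hasDerivAt s
      (ContinuousLinearMap.hasFDerivAt (ContinuousLinearMap.snd ℝ ℝ ℝ)) hcomp
    simpa [Function.comp_def, hpt s] using hsnd
  set φ : ℝ → ℝ := fun s => (∫ ξ in a..x s, ρ (s, ξ)) - ∫ r in (0:ℝ)..s, j (r, a) with hφ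
  have hφd : ∀ s, HasDerivAt φ 0 s := by
    intro s
    have hprod : HasDerivAt (fun s => (s, x s)) ((1 : ℝ), j (s, x s) / ρ (s, x s)) s :=
      (hasDerivAt_id s).prodMk (hxd s)
    have hterm1 := HasFDerivAt.comp_hasDerivAt s (joint ρ hρ a (s, x s)) hprod
    have hterm2 : HasDerivAt (fun s => ∫ r in (0:ℝ)..s, j (r, a)) (j (s, a)) s := by
      apply intervalIntegral.integral_hasDerivAt_right
      · exact ((hj.continuous.comp (continuous_id.prodMk continuous_const)).intervalIntegrable _ _)
      · exact (hj.continuous.comp (continuous_id.prodMk continuous_const)).stronglyMeasurable.stronglyMeasurableAtFilter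
      · exact (hj.continuous.comp (continuous_id.prodMk continuous_const)).continuousAt
    have hval : ((∫ ξ in a..(s, x s).2, fderiv ℝ ρ ((s, x s).1, ξ) (1, 0)) •
          (ContinuousLinearMap.fst ℝ ℝ ℝ)
        + (ρ (s, x s)) • (ContinuousLinearMap.snd ℝ ℝ ℝ))
          ((1 : ℝ), j (s, x s) / ρ (s, x s)) = j (s, a) := by
      have hrw : (∫ ξ in a..(s, x s).2, fderiv ℝ ρ ((s, x s).1, ξ) (1, 0))
          = j (s, a) - j (s, x s) := by
        have : ∀ ξ, fderiv ℝ ρ ((s : ℝ), ξ) (1, 0) = -(fderiv ℝ j (s, ξ) (0, 1)) := by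
          intro ξ; have := hcont (s, ξ); linarith
        simp only [this]
        rw [intervalIntegral.integral_neg, ftc_x j hj]
        ring
      simp only [ContinuousLinearMap.add_apply, ContinuousLinearMap.smul_apply,
        ContinuousLinearMap.coe_fst', ContinuousLinearMap.coe_snd', smul_eq_mul]
      rw [hrw]
      have hρne : ρ (s, x s) ≠ 0 := ne_of_gt (hρpos _)
      field_simp
      ring
    have := hterm1.fun_sub hterm2
    rw [hval] at this
    simpa using this
  have hc := is_const_of_deriv_eq_zero (fun s => (hφd s).differentiableAt)
    (fun s => (hφd s).deriv) 0 t
  have hx0 : x 0 = (F (-t) (t, a)).2 := by simp [hx]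
  have hxt : x t = a := by simp [hx, hF0]
  simp only [hφ, hx0, hxt, intervalIntegral.integral_same, sub_zero, zero_sub] at hc
  linarith [hc]

/-- main proposition, point detector: for D = {(t,a) : t ≥ 0}
and f_a(s) = ∫_0^s j(t,a) dt, the Bohmian detection probability satisfies
P(τ) = max{f_a(s) : 0 ≤ s ≤ τ} + max{−f_a(s) : 0 ≤ s ≤ τ} for all τ ≥ 0. -/
theorem point_detector_formula
    (ρ j : ℝ × ℝ → ℝ)
    (hρ : ContDiff ℝ 1 ρ) (hj : ContDiff ℝ 1 j)
    (hρpos : ∀ p, 0 < ρ p)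
    (hcont : ∀ p : ℝ × ℝ, fderiv ℝ ρ p (1, 0) + fderiv ℝ j p (0, 1) = 0)
    (F : ℝ → ℝ × ℝ → ℝ × ℝ)
    (hF0 : ∀ p, F 0 p = p)
    (hFgroup : ∀ r s p, F r (F s p) = F (r + s) p)
    (hFode : ∀ (p : ℝ × ℝ) (s : ℝ),
      HasDerivAt (fun τ => F τ p) ((1 : ℝ), j (F s p) / ρ (F s p)) s)
    (𝒳₀ : ℝ × ℝ → ℝ)
    (h𝒳₀ : ∀ p : ℝ × ℝ, 𝒳₀ p = (F (-p.1) p).2)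
    (hint : Integrable (fun ξ => ρ (0, ξ)))
    (hnorm : (∫ ξ : ℝ, ρ (0, ξ)) = 1)
    (a : ℝ)
    (fa : ℝ → ℝ) (hfa : ∀ s, fa s = ∫ t in (0:ℝ)..s, j (t, a)) :
    ∀ τ : ℝ, 0 ≤ τ →
      (∫ ξ in (𝒳₀ '' {p : ℝ × ℝ | p.2 = a ∧ 0 ≤ p.1 ∧ p.1 ≤ τ}), ρ (0, ξ)) =
        sSup (fa '' Icc 0 τ) + sSup ((fun s => -fa s) '' Icc 0 τ) := by
  intro τ hτ
  set u : ℝ → ℝ := fun t => (F (-t) (t, a)).2 with hu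
  set G : ℝ → ℝ := fun y => ∫ ξ in a..y, ρ (0, ξ) with hG
  have hres : ∀ t, G (u t) = -fa t := by
    intro t
    rw [hfa]
    exact conservation ρ j hρ hj hρpos hcont F hF0 hFode a t
  have hset : 𝒳₀ '' {p : ℝ × ℝ | p.2 = a ∧ 0 ≤ p.1 ∧ p.1 ≤ τ} = u '' Icc 0 τ := by
    ext ξ
    constructor
    · rintro ⟨⟨t, b⟩, ⟨hb, h0, h1⟩, rfl⟩
      simp only at hb h0 h1
      subst hb
      exact ⟨t, ⟨h0, h1⟩, by rw [h𝒳₀]⟩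
    · rintro ⟨t, ht, rfl⟩
      exact ⟨(t, a), ⟨rfl, ht.1, ht.2⟩, by rw [h𝒳₀]⟩
  have hρ0c : Continuous fun ξ => ρ (0, ξ) :=
    hρ.continuous.comp (continuous_const.prodMk continuous_id)
  have hGd : ∀ y, HasDerivAt G (ρ (0, y)) y := by
    intro y
    apply intervalIntegral.integral_hasDerivAt_right
    · exact hρ0c.intervalIntegrable _ _
    · exact hρ0c.stronglyMeasurable.stronglyMeasurableAtFilter
    · exact hρ0c.continuousAt
  have hGmono : StrictMono G :=
    strictMono_of_deriv_pos (fun y => by rw [(hGd y).deriv]; exact hρpos _)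
  have hjac : Continuous fun t : ℝ => j (t, a) :=
    hj.continuous.comp (continuous_id.prodMk continuous_const)
  have hfac : Continuous fa := by
    have : Continuous fun s : ℝ => ∫ t in (0:ℝ)..s, j (t, a) :=
      intervalIntegral.continuous_primitive (fun _ _ => hjac.intervalIntegrable _ _) 0
    exact this.congr (fun s => (hfa s).symm)
  have hKne : (Icc (0:ℝ) τ).Nonempty := nonempty_Icc.mpr hτ
  obtain ⟨t₁, ht₁K, ht₁⟩ := isCompact_Icc.exists_isMaxOn hKne hfac.continuousOn
  obtain ⟨t₂, ht₂K, ht₂⟩ := isCompact_Icc.exists_isMaxOn hKne hfac.neg.continuousOn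
  have hS1 : sSup (fa '' Icc 0 τ) = fa t₁ :=
    IsGreatest.csSup_eq ⟨mem_image_of_mem _ ht₁K, by rintro _ ⟨t, ht, rfl⟩; exact ht₁ ht⟩
  have hS2 : sSup ((fun s => -fa s) '' Icc 0 τ) = -fa t₂ :=
    IsGreatest.csSup_eq ⟨mem_image_of_mem _ ht₂K, by rintro _ ⟨t, ht, rfl⟩; exact ht₂ ht⟩
  have hle12 : -fa t₁ ≤ -fa t₂ := ht₂ ht₁K
  have hord : u t₁ ≤ u t₂ := by
    rw [← hGmono.le_iff_le, hres, hres]; exact hle12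
  have himg : u '' Icc 0 τ = Icc (u t₁) (u t₂) := by
    apply Subset.antisymm
    · rintro _ ⟨t, ht, rfl⟩
      constructor
      · rw [← hGmono.le_iff_le, hres, hres]
        have : fa t ≤ fa t₁ := ht₁ ht
        linarith
      · rw [← hGmono.le_iff_le, hres, hres]
        exact ht₂ ht
    · intro ξ hξ
      have h1 : G ξ ∈ Icc (-fa t₁) (-fa t₂) := by
        constructor
        · rw [← hres]; exact hGmono.monotone hξ.1
        · rw [← hres]; exact hGmono.monotone hξ.2
      have hsub : uIcc t₁ t₂ ⊆ Icc 0 τ := (ordConnected_Icc).uIcc_subset ht₁K ht₂K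
      obtain ⟨t, htI, htv⟩ := intermediate_value_uIcc
        (f := fun t => -fa t) (hfac.neg.continuousOn.mono (by intro z hz; exact hz)) (by
          rw [uIcc_of_le hle12]; exact h1)
      refine ⟨t, hsub htI, hGmono.injective ?_⟩
      rw [hres]; exact htv
  rw [hset, himg]
  have hIcc : (∫ ξ in Icc (u t₁) (u t₂), ρ (0, ξ)) = ∫ ξ in (u t₁)..(u t₂), ρ (0, ξ) := by
    rw [intervalIntegral.integral_of_le hord, integral_Icc_eq_integral_Ioc]
  have hGdiff : (∫ ξ in (u t₁)..(u t₂), ρ (0, ξ)) = G (u t₂) - G (u t₁) := by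
    rw [hG]
    exact (intervalIntegral.integral_interval_sub_left
      (hρ0c.intervalIntegrable _ _) (hρ0c.intervalIntegrable _ _)).symm
  rw [hIcc, hGdiff, hres, hres, hS1, hS2]
  ring
end

section
/- Main proposition (extended detector): Under the same hypotheses (ρ, j C^1, ρ > 0, continuity equation, complete flow, normalized ρ(0,·)), let a < b, D = {(t,x) : x ∈ [a,b], t ≥ 0}, D_τ = {p ∈ D : t(p) ≤ τ}, f_a(s) = ∫_0^s j(t,a)dt, f_b(s) = ∫_0^s j(t,b)dt. Then for all τ ≥ 0: P(τ) = P(0) + max{f_a(s) : 0 ≤ s ≤ τ} + max{−f_b(s) : 0 ≤ s ≤ τ}, where P(0) = ∫_a^b ρ(0,ξ)dξ. -/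
open Set MeasureTheory intervalIntegral

namespace ExtDet

lemma hasDerivAt_fst_slice (f : ℝ × ℝ → ℝ) (hf : ContDiff ℝ 1 f) (t η : ℝ) :
    HasDerivAt (fun t => f (t, η)) (fderiv ℝ f (t, η) (1, 0)) t :=
  ((hf.differentiable one_ne_zero (t, η)).hasFDerivAt).comp_hasDerivAt t
    ((hasDerivAt_id t).prodMk (hasDerivAt_const t η))

lemma hasDerivAt_snd_slice (f : ℝ × ℝ → ℝ) (hf : ContDiff ℝ 1 f) (t η : ℝ) :
    HasDerivAt (fun η => f (t, η)) (fderiv ℝ f (t, η) (0, 1)) η :=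
  ((hf.differentiable one_ne_zero (t, η)).hasFDerivAt).comp_hasDerivAt η
    ((hasDerivAt_const η t).prodMk (hasDerivAt_id η))

lemma continuous_fderiv_apply (f : ℝ × ℝ → ℝ) (hf : ContDiff ℝ 1 f) (v : ℝ × ℝ) :
    Continuous fun p => fderiv ℝ f p v :=
  (hf.continuous_fderiv one_ne_zero).clm_apply continuous_const

lemma cont_slice_fst (f : ℝ × ℝ → ℝ) (hf : Continuous f) (η : ℝ) :
    Continuous fun t => f (t, η) := hf.comp (continuous_id.prodMk continuous_const)

lemma cont_slice_snd (f : ℝ × ℝ → ℝ) (hf : Continuous f) (t : ℝ) :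
    Continuous fun η => f (t, η) := hf.comp (continuous_const.prodMk continuous_id)

lemma hasDerivAt_param (f : ℝ × ℝ → ℝ) (hf : ContDiff ℝ 1 f) (y₁ y₂ t₀ : ℝ) :
    HasDerivAt (fun t => ∫ η in y₁..y₂, f (t, η))
      (∫ η in y₁..y₂, fderiv ℝ f (t₀, η) (1, 0)) t₀ := by
  have hK : IsCompact (Icc (t₀ - 1) (t₀ + 1) ×ˢ uIcc y₁ y₂) :=
    isCompact_Icc.prod isCompact_uIcc
  obtain ⟨C, hC⟩ := hK.exists_bound_of_continuousOn
    ((continuous_fderiv_apply f hf (1, 0)).continuousOn)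
  refine (intervalIntegral.hasDerivAt_integral_of_dominated_loc_of_deriv_le (F := fun t η => f (t, η))
      (F' := fun t η => fderiv ℝ f (t, η) (1, 0)) (bound := fun _ => C) (s := Metric.ball t₀ 1)
      (Metric.ball_mem_nhds t₀ one_pos) ?_ ?_ ?_ ?_ ?_ ?_).2
  · exact Filter.Eventually.of_forall fun t =>
      ((cont_slice_snd f hf.continuous t).aestronglyMeasurable)
  · exact (cont_slice_snd f hf.continuous t₀).intervalIntegrable _ _
  · exact ((continuous_fderiv_apply f hf (1, 0)).comp
      (continuous_const.prodMk continuous_id)).aestronglyMeasurable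
  · refine Filter.Eventually.of_forall fun η hη t ht => ?_
    have h1 : |t - t₀| < 1 := by
      have := Metric.mem_ball.mp ht; rwa [Real.dist_eq] at this
    exact hC _ ⟨⟨by linarith [abs_le.mp h1.le], by linarith [(abs_le.mp h1.le).2]⟩,
      uIoc_subset_uIcc hη⟩
  · exact intervalIntegrable_const
  · exact Filter.Eventually.of_forall fun η hη t ht => hasDerivAt_fst_slice f hf t η


lemma rho_shift (ρ j : ℝ × ℝ → ℝ) (hρ : ContDiff ℝ 1 ρ) (hj : ContDiff ℝ 1 j)
    (hcont : ∀ p : ℝ × ℝ, fderiv ℝ ρ p (1, 0) + fderiv ℝ j p (0, 1) = 0)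
    (y₁ y₂ t : ℝ) :
    (∫ η in y₁..y₂, ρ (t, η)) =
      (∫ η in y₁..y₂, ρ (0, η)) - ∫ u in (0:ℝ)..t, (j (u, y₂) - j (u, y₁)) := by
  set W : ℝ → ℝ := fun t =>
    (∫ η in y₁..y₂, ρ (t, η)) + ∫ u in (0:ℝ)..t, (j (u, y₂) - j (u, y₁)) with hW
  have gcont : Continuous fun u => j (u, y₂) - j (u, y₁) :=
    (cont_slice_fst j hj.continuous y₂).sub (cont_slice_fst j hj.continuous y₁)
  have hderiv : ∀ t₀, HasDerivAt W 0 t₀ := by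
    intro t₀
    have h1 := hasDerivAt_param ρ hρ y₁ y₂ t₀
    have h2 : HasDerivAt (fun t => ∫ u in (0:ℝ)..t, (j (u, y₂) - j (u, y₁)))
        (j (t₀, y₂) - j (t₀, y₁)) t₀ :=
      intervalIntegral.integral_hasDerivAt_right (gcont.intervalIntegrable _ _)
        (gcont.stronglyMeasurableAtFilter _ _) gcont.continuousAt
    have e2 : (∫ η in y₁..y₂, fderiv ℝ j (t₀, η) (0, 1)) = j (t₀, y₂) - j (t₀, y₁) :=
      intervalIntegral.integral_eq_sub_of_hasDerivAt
        (fun η _ => hasDerivAt_snd_slice j hj t₀ η)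
        (((continuous_fderiv_apply j hj (0, 1)).comp
          (continuous_const.prodMk continuous_id)).intervalIntegrable _ _)
    have key : (∫ η in y₁..y₂, fderiv ℝ ρ (t₀, η) (1, 0))
        = -(j (t₀, y₂) - j (t₀, y₁)) := by
      have e1 : (∫ η in y₁..y₂, fderiv ℝ ρ (t₀, η) (1, 0))
          = ∫ η in y₁..y₂, -(fderiv ℝ j (t₀, η) (0, 1)) := by
        refine intervalIntegral.integral_congr fun η _ => ?_
        have := hcont (t₀, η); linarith
      rw [e1, intervalIntegral.integral_neg, e2]
    have h3 := h1.add h2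
    rw [key] at h3
    simp at h3; exact h3
  have hWconst : W t = W 0 :=
    is_const_of_deriv_eq_zero (fun u => (hderiv u).differentiableAt)
      (fun u => (hderiv u).deriv) t 0
  have h0 : W 0 = ∫ η in y₁..y₂, ρ (0, η) := by simp [hW]
  have ht : W t = (∫ η in y₁..y₂, ρ (t, η)) + ∫ u in (0:ℝ)..t, (j (u, y₂) - j (u, y₁)) := rfl
  linarith [hWconst, h0, ht]

lemma flux (ρ j : ℝ × ℝ → ℝ) (hρ : ContDiff ℝ 1 ρ) (hj : ContDiff ℝ 1 j)
    (hρpos : ∀ p, 0 < ρ p)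
    (hcont : ∀ p : ℝ × ℝ, fderiv ℝ ρ p (1, 0) + fderiv ℝ j p (0, 1) = 0)
    (x : ℝ → ℝ) (hx : ∀ t, HasDerivAt x (j (t, x t) / ρ (t, x t)) t)
    (c s : ℝ) (hxs : x s = c) :
    (∫ ξ in (x 0)..c, ρ (0, ξ)) = ∫ u in (0:ℝ)..s, j (u, c) := by
  set ψ : ℝ → ℝ → ℝ :=
    fun t y => (∫ ξ in (0:ℝ)..y, ρ (0, ξ)) - ∫ u in (0:ℝ)..t, j (u, y) with hψ
  have hId : ∀ t y₁ y₂, ψ t y₂ - ψ t y₁ = ∫ η in y₁..y₂, ρ (t, η) := by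
    intro t y₁ y₂
    have ha : (∫ ξ in (0:ℝ)..y₂, ρ (0, ξ)) - (∫ ξ in (0:ℝ)..y₁, ρ (0, ξ))
        = ∫ η in y₁..y₂, ρ (0, η) :=
      intervalIntegral.integral_interval_sub_left
        ((cont_slice_snd ρ hρ.continuous 0).intervalIntegrable _ _)
        ((cont_slice_snd ρ hρ.continuous 0).intervalIntegrable _ _)
    have hb : (∫ u in (0:ℝ)..t, j (u, y₂)) - (∫ u in (0:ℝ)..t, j (u, y₁))
        = ∫ u in (0:ℝ)..t, (j (u, y₂) - j (u, y₁)) :=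
      (intervalIntegral.integral_sub
        ((cont_slice_fst j hj.continuous y₂).intervalIntegrable _ _)
        ((cont_slice_fst j hj.continuous y₁).intervalIntegrable _ _)).symm
    rw [rho_shift ρ j hρ hj hcont y₁ y₂ t]
    simp only [hψ]
    linarith [ha, hb]
  set g : ℝ → ℝ := fun t => ψ t (x t) with hg
  have hxcont : Continuous x := continuous_iff_continuousAt.mpr fun t => (hx t).continuousAt
  have hgderiv : ∀ t₀, HasDerivAt g 0 t₀ := by
    intro t₀
    set x₀ := x t₀ with hx₀
    set ρ₀ := ρ (t₀, x₀) with hρ₀def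
    set j₀ := j (t₀, x₀) with hj₀def
    set v := j₀ / ρ₀ with hvdef
    have hρ₀ : 0 < ρ₀ := hρpos _
    have hrv : ρ₀ * v = j₀ := by rw [hvdef]; field_simp
    have hT1 : (fun t => ∫ η in x₀..(x t), (ρ (t, η) - ρ₀)) =o[nhds t₀]
        (fun t => t - t₀) := by
      rw [Asymptotics.isLittleO_iff]
      intro ε hε
      have hxo := (hasDerivAt_iff_isLittleO.mp (hx t₀)).def one_pos
      set K := |v| + 1 with hK
      have hKpos : 0 < K := by positivity
      have hgrow : ∀ᶠ t in nhds t₀, |x t - x₀| ≤ K * |t - t₀| := by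
        filter_upwards [hxo] with t ht
        have h1 : |x t - x₀ - (t - t₀) * v| ≤ 1 * |t - t₀| := by
          simpa [Real.norm_eq_abs, smul_eq_mul] using ht
        have h2 : |(t - t₀) * v| = |t - t₀| * |v| := abs_mul _ _
        have h4 := abs_add_le (x t - x₀ - (t - t₀) * v) ((t - t₀) * v)
        have h5 : x t - x₀ - (t - t₀) * v + (t - t₀) * v = x t - x₀ := by ring
        rw [h5] at h4
        calc |x t - x₀| ≤ |x t - x₀ - (t - t₀) * v| + |(t - t₀) * v| := h4
          _ ≤ 1 * |t - t₀| + |t - t₀| * |v| := by rw [h2]; linarith [h1]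
          _ = K * |t - t₀| := by rw [hK]; ring
      set ε' := ε / K with hε'
      have hε'pos : 0 < ε' := by positivity
      have hρc : ContinuousAt ρ (t₀, x₀) := hρ.continuous.continuousAt
      obtain ⟨δ, hδpos, hδ⟩ := Metric.continuousAt_iff.mp hρc ε' hε'pos
      have E1 : ∀ᶠ t in nhds t₀, |t - t₀| < δ := by
        have := Metric.ball_mem_nhds t₀ hδpos
        filter_upwards [this] with t ht
        simpa [Real.dist_eq] using ht
      have E2 : ∀ᶠ t in nhds t₀, |x t - x₀| < δ := by
        have hc : ContinuousAt x t₀ := hxcont.continuousAt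
        have := hc.tendsto (Metric.ball_mem_nhds x₀ hδpos)
        filter_upwards [this] with t ht
        simpa [Real.dist_eq] using ht
      filter_upwards [hgrow, E1, E2] with t hgt h1 h2
      have hbnd : ∀ η ∈ Set.uIoc x₀ (x t), ‖ρ (t, η) - ρ₀‖ ≤ ε' := by
        intro η hη
        have hη' : |η - x₀| ≤ |x t - x₀| := by
          have := abs_sub_left_of_mem_uIcc (uIoc_subset_uIcc hη)
          simpa using this
        have hdist : dist (t, η) (t₀, x₀) < δ := by
          rw [Prod.dist_eq]
          exact max_lt (by simpa [Real.dist_eq] using h1)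
            (by rw [Real.dist_eq]; exact lt_of_le_of_lt hη' h2)
        have := hδ hdist
        rw [Real.dist_eq] at this
        exact le_of_lt (by simpa [Real.norm_eq_abs, hρ₀def] using this)
      have hnorm := intervalIntegral.norm_integral_le_of_norm_le_const hbnd
      calc ‖∫ η in x₀..(x t), (ρ (t, η) - ρ₀)‖ ≤ ε' * |x t - x₀| := hnorm
        _ ≤ ε' * (K * |t - t₀|) := by
            exact mul_le_mul_of_nonneg_left hgt (le_of_lt hε'pos)
        _ = ε * |t - t₀| := by rw [hε']; field_simp
        _ = ε * ‖t - t₀‖ := by rw [Real.norm_eq_abs]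
    have hT2 : (fun t => ρ₀ * (x t - x₀ - (t - t₀) * v)) =o[nhds t₀]
        (fun t => t - t₀) := by
      have := (hasDerivAt_iff_isLittleO.mp (hx t₀)).const_mul_left ρ₀
      simpa [smul_eq_mul] using this
    have hA : HasDerivAt (fun t => ∫ η in x₀..(x t), ρ (t, η)) j₀ t₀ := by
      rw [hasDerivAt_iff_isLittleO]
      have heq : ∀ t, (∫ η in x₀..(x t), (ρ (t, η) - ρ₀)) + ρ₀ * (x t - x₀ - (t - t₀) * v)
          = (∫ η in x₀..(x t), ρ (t, η)) - (∫ η in x₀..(x t₀), ρ (t₀, η))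
            - (t - t₀) • j₀ := by
        intro t
        have h1 : (∫ η in x₀..(x t), (ρ (t, η) - ρ₀))
            = (∫ η in x₀..(x t), ρ (t, η)) - (x t - x₀) * ρ₀ := by
          rw [intervalIntegral.integral_sub
            ((cont_slice_snd ρ hρ.continuous t).intervalIntegrable _ _)
            intervalIntegrable_const, intervalIntegral.integral_const, smul_eq_mul]
        have h0 : (∫ η in x₀..(x t₀), ρ (t₀, η)) = 0 := by
          rw [← hx₀, intervalIntegral.integral_same]
        have h2 : ρ₀ * ((t - t₀) * v) = (t - t₀) * j₀ := by rw [← hrv]; ring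
        rw [h0, h1, smul_eq_mul]
        nlinarith [h2]
      exact (hT1.add hT2).congr heq (fun _ => rfl)
    have hB : HasDerivAt (fun t => ∫ u in t₀..t, j (u, x₀)) j₀ t₀ :=
      intervalIntegral.integral_hasDerivAt_right
        ((cont_slice_fst j hj.continuous x₀).intervalIntegrable _ _)
        ((cont_slice_fst j hj.continuous x₀).stronglyMeasurableAtFilter _ _)
        (cont_slice_fst j hj.continuous x₀).continuousAt
    have hrepr : ∀ t, g t = g t₀ + ((∫ η in x₀..(x t), ρ (t, η)) - ∫ u in t₀..t, j (u, x₀)) := by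
      intro t
      have e1 : ψ t (x t) - ψ t x₀ = ∫ η in x₀..(x t), ρ (t, η) := hId t x₀ (x t)
      have esub : (∫ u in (0:ℝ)..t, j (u, x₀)) - (∫ u in (0:ℝ)..t₀, j (u, x₀))
          = ∫ u in t₀..t, j (u, x₀) :=
        intervalIntegral.integral_interval_sub_left
          ((cont_slice_fst j hj.continuous x₀).intervalIntegrable _ _)
          ((cont_slice_fst j hj.continuous x₀).intervalIntegrable _ _)
      have e2 : ψ t x₀ - ψ t₀ x₀ = -(∫ u in t₀..t, j (u, x₀)) := by
        simp only [hψ]; linarith [esub]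
      have hgt : g t = ψ t (x t) := rfl
      have hgt₀ : g t₀ = ψ t₀ (x t₀) := rfl
      rw [hgt, hgt₀, ← hx₀]
      linarith [e1, e2]
    have hfinal := ((hasDerivAt_const t₀ (g t₀)).add (hA.sub hB)).congr_of_eventuallyEq
      (Filter.Eventually.of_forall hrepr)
    simpa using hfinal
  have hgconst : g s = g 0 :=
    is_const_of_deriv_eq_zero (fun u => (hgderiv u).differentiableAt)
      (fun u => (hgderiv u).deriv) s 0
  have hg0 : g 0 = ∫ ξ in (0:ℝ)..(x 0), ρ (0, ξ) := by simp [hg, hψ]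
  have hgs : g s = (∫ ξ in (0:ℝ)..c, ρ (0, ξ)) - ∫ u in (0:ℝ)..s, j (u, c) := by
    simp [hg, hψ, hxs]
  have hsplit : (∫ ξ in (0:ℝ)..c, ρ (0, ξ)) - (∫ ξ in (0:ℝ)..(x 0), ρ (0, ξ))
      = ∫ ξ in (x 0)..c, ρ (0, ξ) :=
    intervalIntegral.integral_interval_sub_left
      ((cont_slice_snd ρ hρ.continuous 0).intervalIntegrable _ _)
      ((cont_slice_snd ρ hρ.continuous 0).intervalIntegrable _ _)
  linarith [hgconst, hg0, hgs, hsplit]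

end ExtDet

/-- main proposition, extended detector: for a < b,
D = {(t,x) : x ∈ [a,b], t ≥ 0}, D_τ = {p ∈ D : t(p) ≤ τ},
f_a(s) = ∫_0^s j(t,a) dt and f_b(s) = ∫_0^s j(t,b) dt, the detection
probability satisfies
P(τ) = P(0) + max{f_a(s) : 0 ≤ s ≤ τ} + max{−f_b(s) : 0 ≤ s ≤ τ},
where P(0) = ∫_a^b ρ(0,ξ) dξ. -/
theorem extended_detector_formula
    (ρ j : ℝ × ℝ → ℝ)
    (hρ : ContDiff ℝ 1 ρ) (hj : ContDiff ℝ 1 j)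
    (hρpos : ∀ p, 0 < ρ p)
    (hcont : ∀ p : ℝ × ℝ, fderiv ℝ ρ p (1, 0) + fderiv ℝ j p (0, 1) = 0)
    (F : ℝ → ℝ × ℝ → ℝ × ℝ)
    (hF0 : ∀ p, F 0 p = p)
    (hFgroup : ∀ r s p, F r (F s p) = F (r + s) p)
    (hFode : ∀ (p : ℝ × ℝ) (s : ℝ),
      HasDerivAt (fun τ => F τ p) ((1 : ℝ), j (F s p) / ρ (F s p)) s)
    (𝒳₀ : ℝ × ℝ → ℝ)
    (h𝒳₀ : ∀ p : ℝ × ℝ, 𝒳₀ p = (F (-p.1) p).2)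
    (hint : Integrable (fun ξ => ρ (0, ξ)))
    (hnorm : (∫ ξ : ℝ, ρ (0, ξ)) = 1)
    (a b : ℝ) (hab : a < b)
    (fa fb : ℝ → ℝ)
    (hfa : ∀ s, fa s = ∫ t in (0:ℝ)..s, j (t, a))
    (hfb : ∀ s, fb s = ∫ t in (0:ℝ)..s, j (t, b)) :
    ∀ τ : ℝ, 0 ≤ τ →
      (∫ ξ in
        (𝒳₀ '' {p : ℝ × ℝ | a ≤ p.2 ∧ p.2 ≤ b ∧ 0 ≤ p.1 ∧ p.1 ≤ τ}),
          ρ (0, ξ)) =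
        (∫ ξ in a..b, ρ (0, ξ))
          + sSup (fa '' Icc 0 τ) + sSup ((fun s => -fb s) '' Icc 0 τ) := by
  intro τ hτ
  have hρc := hρ.continuous
  have hjc := hj.continuous
  have hρ0int : ∀ u v : ℝ, IntervalIntegrable (fun ξ => ρ (0, ξ)) volume u v :=
    fun u v => (ExtDet.cont_slice_snd ρ hρc 0).intervalIntegrable u v
  -- first component of the flow
  have hFst : ∀ (p : ℝ × ℝ) (r : ℝ), (F r p).1 = p.1 + r := by
    intro p r
    have hd : ∀ u : ℝ, HasDerivAt (fun r => (F r p).1 - r) 0 u := by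
      intro u
      have h1 : HasDerivAt (fun r => (F r p).1) 1 u := by
        have := (ContinuousLinearMap.fst ℝ ℝ ℝ).hasFDerivAt.comp_hasDerivAt u (hFode p u)
        simp at this; exact this
      have h2 := h1.sub (hasDerivAt_id u); simp at h2; exact h2
    have hc := is_const_of_deriv_eq_zero (fun u => (hd u).differentiableAt)
      (fun u => (hd u).deriv) r 0
    simp [hF0] at hc
    linarith
  set y : ℝ → ℝ → ℝ := fun ξ t => (F t (0, ξ)).2 with hy
  have hFval : ∀ ξ t, F t (0, ξ) = (t, y ξ t) := by
    intro ξ t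
    refine Prod.ext ?_ rfl
    rw [hFst]; simp
  have hyderiv : ∀ ξ t, HasDerivAt (y ξ) (j (t, y ξ t) / ρ (t, y ξ t)) t := by
    intro ξ t
    have h1 := hFode (0, ξ) t
    have h2 := (ContinuousLinearMap.snd ℝ ℝ ℝ).hasFDerivAt.comp_hasDerivAt t h1
    simp only [hFval ξ t] at h2
    simp at h2; exact h2
  have hycont : ∀ ξ, Continuous (y ξ) :=
    fun ξ => continuous_iff_continuousAt.mpr fun t => (hyderiv ξ t).continuousAt
  have hy0 : ∀ ξ, y ξ 0 = ξ := fun ξ => by simp [hy, hF0]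
  have hXdef : ∀ s xv : ℝ, F (-s) (s, xv) = (0, 𝒳₀ (s, xv)) := by
    intro s xv
    refine Prod.ext ?_ ?_
    · rw [hFst]; simp
    · rw [h𝒳₀]
  have hkey1 : ∀ s xv : ℝ, y (𝒳₀ (s, xv)) s = xv := by
    intro s xv
    have h1 : F s (F (-s) (s, xv)) = (s, xv) := by
      rw [hFgroup]; simp [hF0]
    rw [hXdef] at h1
    have := congrArg Prod.snd h1
    simpa [hy] using this
  have hkey2 : ∀ (s ξ xv : ℝ), y ξ s = xv → 𝒳₀ (s, xv) = ξ := by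
    intro s ξ xv h
    have h1 : F s (0, ξ) = (s, xv) := by rw [hFval, h]
    have h2 : F (-s) (s, xv) = (0, ξ) := by
      rw [← h1, hFgroup]; simp [hF0]
    rw [h𝒳₀]; simp [h2]
  have hmono : ∀ ξ₁ ξ₂ t, ξ₁ < ξ₂ → y ξ₁ t < y ξ₂ t := by
    intro ξ₁ ξ₂ t hlt
    by_contra hcon
    push_neg at hcon
    set d : ℝ → ℝ := fun u => y ξ₂ u - y ξ₁ u with hd
    have hdc : ContinuousOn d (uIcc 0 t) := ((hycont ξ₂).sub (hycont ξ₁)).continuousOn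
    have h0mem : (0:ℝ) ∈ uIcc (d 0) (d t) := by
      rw [mem_uIcc]
      right
      constructor
      · simp only [hd]; linarith
      · simp only [hd, hy0]; linarith
    obtain ⟨u, hu, hdu⟩ := intermediate_value_uIcc hdc h0mem
    have hsnd : y ξ₁ u = y ξ₂ u := by
      simp only [hd] at hdu; linarith
    have hequ : F u (0, ξ₁) = F u (0, ξ₂) := by
      rw [hFval, hFval, hsnd]
    have h3 := congrArg (F (-u)) hequ
    rw [hFgroup, hFgroup] at h3
    simp [hF0] at h3
    linarith
  have hmono' : ∀ ξ₁ ξ₂ t, ξ₁ ≤ ξ₂ → y ξ₁ t ≤ y ξ₂ t := by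
    intro ξ₁ ξ₂ t h
    rcases eq_or_lt_of_le h with rfl | h
    · exact le_rfl
    · exact (hmono _ _ t h).le
  have hXmono : ∀ s x₁ x₂ : ℝ, x₁ ≤ x₂ → 𝒳₀ (s, x₁) ≤ 𝒳₀ (s, x₂) := by
    intro s x₁ x₂ h
    by_contra hcon
    push_neg at hcon
    have h1 := hmono _ _ s hcon
    rw [hkey1, hkey1] at h1
    linarith
  have hflux : ∀ (s c : ℝ), (∫ ξ in (𝒳₀ (s, c))..c, ρ (0, ξ)) = ∫ u in (0:ℝ)..s, j (u, c) := by
    intro s c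
    have h := ExtDet.flux ρ j hρ hj hρpos hcont (y (𝒳₀ (s, c)))
      (hyderiv _) c s (hkey1 s c)
    rwa [hy0] at h
  have hfa_flux : ∀ s, fa s = ∫ ξ in (𝒳₀ (s, a))..a, ρ (0, ξ) := by
    intro s; rw [hfa s, ← hflux s a]
  have hfb_flux : ∀ s, fb s = ∫ ξ in (𝒳₀ (s, b))..b, ρ (0, ξ) := by
    intro s; rw [hfb s, ← hflux s b]
  have hfacont : Continuous fa := by
    rw [funext hfa]
    exact intervalIntegral.continuous_primitive
      (fun u v => (ExtDet.cont_slice_fst j hjc a).intervalIntegrable u v) 0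
  have hfbcont : Continuous fb := by
    rw [funext hfb]
    exact intervalIntegral.continuous_primitive
      (fun u v => (ExtDet.cont_slice_fst j hjc b).intervalIntegrable u v) 0
  have hne : (Icc (0:ℝ) τ).Nonempty := nonempty_Icc.mpr hτ
  obtain ⟨s₁, hs₁mem, hs₁max⟩ := isCompact_Icc.exists_isMaxOn hne hfacont.continuousOn
  obtain ⟨s₂, hs₂mem, hs₂max⟩ := isCompact_Icc.exists_isMaxOn hne
    hfbcont.neg.continuousOn
  set m := 𝒳₀ (s₁, a) with hm
  set M := 𝒳₀ (s₂, b) with hM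
  have hpos : ∀ ξ₁ ξ₂ : ℝ, ξ₁ < ξ₂ → 0 < ∫ ξ in ξ₁..ξ₂, ρ (0, ξ) := by
    intro ξ₁ ξ₂ h
    exact intervalIntegral.intervalIntegral_pos_of_pos (hρ0int ξ₁ ξ₂) (fun ξ => hρpos _) h
  have hcomp : ∀ (c ξ₁ ξ₂ : ℝ),
      (∫ ξ in ξ₁..c, ρ (0,ξ)) ≤ (∫ ξ in ξ₂..c, ρ (0,ξ)) → ξ₂ ≤ ξ₁ := by
    intro c ξ₁ ξ₂ h
    by_contra hc
    push_neg at hc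
    have hsplit : (∫ ξ in ξ₁..c, ρ (0,ξ))
        = (∫ ξ in ξ₁..ξ₂, ρ (0,ξ)) + ∫ ξ in ξ₂..c, ρ (0,ξ) :=
      (intervalIntegral.integral_add_adjacent_intervals (hρ0int _ _) (hρ0int _ _)).symm
    have := hpos ξ₁ ξ₂ hc
    linarith
  have hfa0 : fa 0 = 0 := by rw [hfa]; simp
  have hfb0 : fb 0 = 0 := by rw [hfb]; simp
  have hXa_ge : ∀ s ∈ Icc (0:ℝ) τ, m ≤ 𝒳₀ (s, a) := by
    intro s hs
    have h1 : fa s ≤ fa s₁ := hs₁max hs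
    rw [hfa_flux s, hfa_flux s₁, ← hm] at h1
    exact hcomp a _ _ h1
  have hXb_le : ∀ s ∈ Icc (0:ℝ) τ, 𝒳₀ (s, b) ≤ M := by
    intro s hs
    have h1 : -fb s ≤ -fb s₂ := hs₂max hs
    have h1' : fb s₂ ≤ fb s := by linarith
    rw [hfb_flux s, hfb_flux s₂, ← hM] at h1'
    exact hcomp b _ _ h1'
  have hma : m ≤ a := by
    have h1 : fa 0 ≤ fa s₁ := hs₁max (left_mem_Icc.mpr hτ)
    rw [hfa0, hfa_flux s₁, ← hm] at h1
    have h2 : (∫ ξ in a..a, ρ (0,ξ)) ≤ ∫ ξ in m..a, ρ (0,ξ) := by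
      rw [intervalIntegral.integral_same]; exact h1
    exact hcomp a _ _ h2
  have hbM : b ≤ M := by
    have h1 : -fb 0 ≤ -fb s₂ := hs₂max (left_mem_Icc.mpr hτ)
    rw [hfb0] at h1
    have h1' : fb s₂ ≤ 0 := by linarith
    rw [hfb_flux s₂, ← hM] at h1'
    have h2 : (∫ ξ in M..b, ρ (0,ξ)) ≤ ∫ ξ in b..b, ρ (0,ξ) := by
      rw [intervalIntegral.integral_same]; exact h1'
    exact hcomp b _ _ h2
  have hX0 : ∀ ξ : ℝ, 𝒳₀ (0, ξ) = ξ := fun ξ => hkey2 0 ξ ξ (hy0 ξ)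
  -- the image is the interval [m, M]
  have hset : 𝒳₀ '' {p : ℝ × ℝ | a ≤ p.2 ∧ p.2 ≤ b ∧ 0 ≤ p.1 ∧ p.1 ≤ τ} = Icc m M := by
    ext ξ
    constructor
    · rintro ⟨p, ⟨hpa, hpb, hp0, hpτ⟩, rfl⟩
      have hp : (p.1, p.2) = p := rfl
      constructor
      · have h1 : m ≤ 𝒳₀ (p.1, a) := hXa_ge p.1 ⟨hp0, hpτ⟩
        have h2 : 𝒳₀ (p.1, a) ≤ 𝒳₀ (p.1, p.2) := hXmono _ _ _ hpa
        rw [hp] at h2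
        linarith
      · have h1 : 𝒳₀ (p.1, b) ≤ M := hXb_le p.1 ⟨hp0, hpτ⟩
        have h2 : 𝒳₀ (p.1, p.2) ≤ 𝒳₀ (p.1, b) := hXmono _ _ _ hpb
        rw [hp] at h2
        linarith
    · rintro ⟨hmξ, hξM⟩
      rcases le_or_gt a ξ with haξ | hξa
      · rcases le_or_gt ξ b with hξb | hbξ
        · exact ⟨(0, ξ), ⟨haξ, hξb, le_rfl, hτ⟩, hX0 ξ⟩
        · -- b < ξ ≤ M
          have h1 : y ξ s₂ ≤ y M s₂ := hmono' ξ M s₂ hξM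
          have h2 : y M s₂ = b := hkey1 s₂ b
          have h3 : b ≤ y ξ 0 := by rw [hy0]; linarith
          have hbmem : b ∈ uIcc (y ξ 0) (y ξ s₂) := by
            rw [mem_uIcc]; right; exact ⟨by linarith, h3⟩
          obtain ⟨u, hu, hyu⟩ := intermediate_value_uIcc
            ((hycont ξ).continuousOn) hbmem
          have hu' : u ∈ Icc 0 s₂ := by rwa [uIcc_of_le hs₂mem.1] at hu
          exact ⟨(u, b), ⟨hab.le, le_rfl, hu'.1, le_trans hu'.2 hs₂mem.2⟩,
            hkey2 u ξ b hyu⟩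
      · -- m ≤ ξ < a
        have h1 : y m s₁ ≤ y ξ s₁ := hmono' m ξ s₁ hmξ
        have h2 : y m s₁ = a := hkey1 s₁ a
        have h3 : y ξ 0 ≤ a := by rw [hy0]; linarith
        have hamem : a ∈ uIcc (y ξ 0) (y ξ s₁) := by
          rw [mem_uIcc]; left; exact ⟨h3, by linarith⟩
        obtain ⟨u, hu, hyu⟩ := intermediate_value_uIcc
          ((hycont ξ).continuousOn) hamem
        have hu' : u ∈ Icc 0 s₁ := by rwa [uIcc_of_le hs₁mem.1] at hu
        exact ⟨(u, a), ⟨le_rfl, hab.le, hu'.1, le_trans hu'.2 hs₁mem.2⟩,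
          hkey2 u ξ a hyu⟩
  rw [hset]
  have hmM : m ≤ M := le_trans hma (le_trans hab.le hbM)
  rw [integral_Icc_eq_integral_Ioc, ← intervalIntegral.integral_of_le hmM]
  have hsplit1 : (∫ ξ in m..a, ρ (0,ξ)) + (∫ ξ in a..M, ρ (0,ξ)) = ∫ ξ in m..M, ρ (0,ξ) :=
    intervalIntegral.integral_add_adjacent_intervals (hρ0int _ _) (hρ0int _ _)
  have hsplit2 : (∫ ξ in a..b, ρ (0,ξ)) + (∫ ξ in b..M, ρ (0,ξ)) = ∫ ξ in a..M, ρ (0,ξ) :=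
    intervalIntegral.integral_add_adjacent_intervals (hρ0int _ _) (hρ0int _ _)
  have hv1 : (∫ ξ in m..a, ρ (0,ξ)) = fa s₁ := by rw [hfa_flux s₁, hm]
  have hv2 : (∫ ξ in b..M, ρ (0,ξ)) = -fb s₂ := by
    have h1 : fb s₂ = ∫ ξ in M..b, ρ (0,ξ) := by rw [hfb_flux s₂, hM]
    rw [intervalIntegral.integral_symm] at h1
    linarith
  have hsSup1 : sSup (fa '' Icc 0 τ) = fa s₁ :=
    IsGreatest.csSup_eq ⟨mem_image_of_mem fa hs₁mem,
      by rintro z ⟨s, hs, rfl⟩; exact hs₁max hs⟩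
  have hsSup2 : sSup ((fun s => -fb s) '' Icc 0 τ) = -fb s₂ :=
    IsGreatest.csSup_eq ⟨mem_image_of_mem _ hs₂mem,
      by rintro z ⟨s, hs, rfl⟩; exact hs₂max hs⟩
  rw [hsSup1, hsSup2]
  linarith
end

section
/- Point-detector density formula: Let f : [0,∞) → ℝ be C^1 with f(0)=0 and define M(τ) = max_{[0,τ]} f + max_{[0,τ]}(−f). Then M is locally absolutely continuous and for almost every τ > 0, M'(τ) = f'(τ)·𝟙[f(τ) = max_{[0,τ]} f] − f'(τ)·𝟙[−f(τ) = max_{[0,τ]}(−f)], where 𝟙 denotes the indicator of the stated condition. -/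
open Set MeasureTheory

noncomputable def runMax (f : ℝ → ℝ) (τ : ℝ) : ℝ := sSup (f '' Icc 0 τ)

lemma runMax_bdd {f : ℝ → ℝ} (hf : Continuous f) (a b : ℝ) : BddAbove (f '' Icc a b) :=
  (isCompact_Icc.image hf).bddAbove

lemma le_runMax {f : ℝ → ℝ} (hf : Continuous f) {s τ : ℝ} (hs : s ∈ Icc 0 τ) :
    f s ≤ runMax f τ :=
  le_csSup (runMax_bdd hf 0 τ) (mem_image_of_mem f hs)

lemma runMax_le {f : ℝ → ℝ} {τ c : ℝ} (hτ : 0 ≤ τ) (h : ∀ s ∈ Icc 0 τ, f s ≤ c) :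
    runMax f τ ≤ c :=
  csSup_le ((nonempty_Icc.mpr hτ).image f) (by rintro x ⟨s, hs, rfl⟩; exact h s hs)

lemma sSup_image_lt {f : ℝ → ℝ} (hf : Continuous f) {u v c : ℝ} (huv : u ≤ v)
    (h : ∀ s ∈ Icc u v, f s < c) : sSup (f '' Icc u v) < c := by
  obtain ⟨s, hs, hmax⟩ := isCompact_Icc.exists_isMaxOn (nonempty_Icc.mpr huv) hf.continuousOn
  have : sSup (f '' Icc u v) ≤ f s :=
    csSup_le ((nonempty_Icc.mpr huv).image f) (by rintro x ⟨w, hw, rfl⟩; exact hmax hw)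
  exact lt_of_le_of_lt this (h s hs)

lemma runMax_neg {f : ℝ → ℝ} {τ : ℝ} (hτ : τ < 0) : runMax f τ = 0 := by
  rw [runMax, Icc_eq_empty (by linarith), image_empty, Real.sSup_empty]

lemma runMax_mono_nonneg {f : ℝ → ℝ} (hf : Continuous f) {a b : ℝ} (ha : 0 ≤ a) (hab : a ≤ b) :
    runMax f a ≤ runMax f b :=
  csSup_le_csSup (runMax_bdd hf 0 b) ((nonempty_Icc.mpr ha).image f)
    (image_mono (f := f) (Icc_subset_Icc_right hab))

lemma runMax_mono {f : ℝ → ℝ} (hf : Continuous f) (hf0 : f 0 = 0) : Monotone (runMax f) := by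
  intro a b hab
  rcases le_or_gt 0 a with ha | ha
  · exact runMax_mono_nonneg hf ha hab
  · rw [runMax_neg ha]
    rcases le_or_gt 0 b with hb | hb
    · calc (0:ℝ) = f 0 := hf0.symm
        _ ≤ runMax f b := le_runMax hf ⟨le_refl 0, hb⟩
    · rw [runMax_neg hb]

lemma runMax_split {f : ℝ → ℝ} (hf : Continuous f) {a b : ℝ} (ha : 0 ≤ a) (hab : a ≤ b) :
    runMax f b = max (runMax f a) (sSup (f '' Icc a b)) := by
  have h : Icc (0:ℝ) b = Icc 0 a ∪ Icc a b := (Icc_union_Icc_eq_Icc ha hab).symm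
  rw [runMax, h, image_union, csSup_union (runMax_bdd hf 0 a) ((nonempty_Icc.mpr ha).image f)
      (runMax_bdd hf a b) ((nonempty_Icc.mpr hab).image f)]
  rfl

lemma runMax_eventually_const {f : ℝ → ℝ} (hf : Continuous f) {τ : ℝ} (hτ : 0 < τ)
    (hlt : f τ < runMax f τ) : ∀ᶠ t in nhds τ, runMax f t = runMax f τ := by
  set c := runMax f τ with hc
  have hev : ∀ᶠ t in nhds τ, f t < c := hf.continuousAt.eventually_lt_const hlt
  obtain ⟨ε, hε, hball⟩ := Metric.eventually_nhds_iff.mp hev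
  set δ := min (ε / 2) (τ / 2) with hδdef
  have hδ : 0 < δ := lt_min (by linarith) (by linarith)
  have hδτ : δ < τ := lt_of_le_of_lt (min_le_right _ _) (by linarith)
  have hmem : ∀ t ∈ Icc (τ - δ) (τ + δ), f t < c := by
    intro t ht
    apply hball
    rw [Real.dist_eq, abs_lt]
    have h2 : δ < ε := lt_of_le_of_lt (min_le_left _ _) (by linarith)
    constructor
    · linarith [ht.1]
    · linarith [ht.2]
  have hτδ : (0:ℝ) ≤ τ - δ := by linarith
  -- runMax f (τ - δ) = c
  have h1 : runMax f (τ - δ) = c := by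
    have hsplit := runMax_split hf hτδ (by linarith : τ - δ ≤ τ)
    rw [← hc] at hsplit
    have hlt2 : sSup (f '' Icc (τ - δ) τ) < c :=
      sSup_image_lt hf (by linarith) fun s hs => hmem s ⟨hs.1, by linarith [hs.2]⟩
    rcases max_cases (runMax f (τ - δ)) (sSup (f '' Icc (τ - δ) τ)) with ⟨he, _⟩ | ⟨he, _⟩
    · rw [he] at hsplit; exact hsplit.symm
    · rw [he] at hsplit; exact absurd hsplit.symm (ne_of_lt hlt2)
  -- runMax f (τ + δ) = c
  have h2 : runMax f (τ + δ) = c := by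
    have hsplit := runMax_split hf hτδ (by linarith : τ - δ ≤ τ + δ)
    have hlt2 : sSup (f '' Icc (τ - δ) (τ + δ)) < c :=
      sSup_image_lt hf (by linarith) hmem
    rw [h1] at hsplit
    rw [hsplit, max_eq_left hlt2.le]
  have hsubset : Ioo (τ - δ) (τ + δ) ∈ nhds τ :=
    Ioo_mem_nhds (by linarith) (by linarith)
  filter_upwards [hsubset] with t ht
  have hle1 : c ≤ runMax f t := h1 ▸ runMax_mono_nonneg hf hτδ ht.1.le
  have hle2 : runMax f t ≤ c := h2 ▸ runMax_mono_nonneg hf (by linarith [ht.1] : (0:ℝ) ≤ t) ht.2.le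
  linarith

lemma runMax_hasDerivAt_zero {f : ℝ → ℝ} (hf : Continuous f) {τ : ℝ} (hτ : 0 < τ)
    (hlt : f τ < runMax f τ) : HasDerivAt (runMax f) 0 τ :=
  (hasDerivAt_const τ (runMax f τ)).congr_of_eventuallyEq (runMax_eventually_const hf hτ hlt)

lemma runMax_hasDerivAt_eq {f f' : ℝ → ℝ} (hf : Continuous f) {τ : ℝ} (hτ : 0 < τ)
    (heq : f τ = runMax f τ) (hd : DifferentiableAt ℝ (runMax f) τ)
    (hder : HasDerivAt f (f' τ) τ) : HasDerivAt (runMax f) (f' τ) τ := by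
  have hmin : IsLocalMin (fun t => runMax f t - f t) τ := by
    have hev : ∀ᶠ t in nhds τ, 0 < t := eventually_gt_nhds hτ
    filter_upwards [hev] with t ht
    have h1 : f t ≤ runMax f t := le_runMax hf ⟨ht.le, le_refl t⟩
    simp only [← heq, sub_self]
    linarith
  have hφd : DifferentiableAt ℝ (fun t => runMax f t - f t) τ :=
    hd.sub hder.differentiableAt
  have hφ0 : deriv (fun t => runMax f t - f t) τ = 0 := hmin.deriv_eq_zero
  have hsub : deriv (fun t => runMax f t - f t) τ = deriv (runMax f) τ - f' τ := by
    rw [deriv_fun_sub hd hder.differentiableAt, hder.deriv]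
  have : deriv (runMax f) τ = f' τ := by linarith [hφ0, hsub.symm.trans hφ0]
  exact this ▸ hd.hasDerivAt

lemma runMax_lipschitz {f : ℝ → ℝ} (hf : Continuous f) {K : NNReal} {T : ℝ}
    (hfl : LipschitzOnWith K f (Icc 0 T)) : LipschitzOnWith K (runMax f) (Icc 0 T) := by
  apply LipschitzOnWith.of_dist_le_mul
  have key : ∀ s ∈ Icc (0:ℝ) T, ∀ t ∈ Icc (0:ℝ) T, s ≤ t →
      runMax f s ≤ runMax f t ∧ runMax f t ≤ runMax f s + K * (t - s) := by
    intro s hs t ht hst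
    refine ⟨runMax_mono_nonneg hf hs.1 hst, ?_⟩
    have hsplit := runMax_split hf hs.1 hst
    obtain ⟨u, hu, hmax⟩ := isCompact_Icc.exists_isMaxOn (nonempty_Icc.mpr hst) hf.continuousOn
    have hsup : sSup (f '' Icc s t) ≤ f u :=
      csSup_le ((nonempty_Icc.mpr hst).image f) (by rintro x ⟨w, hw, rfl⟩; exact hmax hw)
    have hu' : u ∈ Icc (0:ℝ) T := ⟨le_trans hs.1 hu.1, le_trans hu.2 ht.2⟩
    have hlip := hfl.dist_le_mul u hu' s hs
    rw [Real.dist_eq, Real.dist_eq] at hlip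
    have h1 : f u ≤ f s + K * (t - s) := by
      rw [abs_of_nonneg (by linarith [hu.1] : (0:ℝ) ≤ u - s)] at hlip
      have h2 : (K:ℝ) * (u - s) ≤ K * (t - s) :=
        mul_le_mul_of_nonneg_left (by linarith [hu.2]) K.coe_nonneg
      have h3 : f u - f s ≤ |f u - f s| := le_abs_self _
      linarith
    have h4 : f s ≤ runMax f s := le_runMax hf ⟨hs.1, le_refl s⟩
    have h5 : (0:ℝ) ≤ K * (t - s) := mul_nonneg K.coe_nonneg (by linarith)
    rw [hsplit]
    apply max_le
    · linarith
    · linarith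
  intro s hs t ht
  rcases le_total s t with hst | hts
  · obtain ⟨h1, h2⟩ := key s hs t ht hst
    rw [Real.dist_eq, Real.dist_eq, abs_of_nonpos (by linarith), abs_of_nonpos (by linarith)]
    linarith
  · obtain ⟨h1, h2⟩ := key t ht s hs hts
    rw [Real.dist_eq, Real.dist_eq, abs_of_nonneg (by linarith), abs_of_nonneg (by linarith)]
    linarith

lemma cont_lipschitzOnWith {f f' : ℝ → ℝ}
    (hderiv : ∀ s : ℝ, HasDerivAt f (f' s) s) (hf' : Continuous f') (T : ℝ) :
    ∃ K : NNReal, LipschitzOnWith K f (Icc 0 T) := by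
  obtain ⟨C, hC⟩ := (isCompact_Icc (a := (0:ℝ)) (b := T)).exists_bound_of_continuousOn
    hf'.continuousOn
  refine ⟨⟨max C 0, le_max_right _ _⟩, ?_⟩
  apply (convex_Icc (0:ℝ) T).lipschitzOnWith_of_nnnorm_hasDerivWithin_le
    (f' := f') (fun x hx => (hderiv x).hasDerivWithinAt)
  intro x hx
  have h := hC x hx
  exact NNReal.coe_le_coe.mp (by rw [coe_nnnorm]; exact le_trans h (le_max_left _ _))

/-- Point-detector density formula. For f C^1 with f(0) = 0 and
M(τ) = max_{[0,τ]} f + max_{[0,τ]}(−f), M is locally absolutely continuous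
(indeed locally Lipschitz) and for a.e. τ > 0,
M'(τ) = f'(τ)·𝟙[f(τ) = max_{[0,τ]} f] − f'(τ)·𝟙[−f(τ) = max_{[0,τ]}(−f)]. -/
theorem point_detector_density_formula
    (f f' : ℝ → ℝ)
    (hderiv : ∀ s : ℝ, HasDerivAt f (f' s) s)
    (hf' : Continuous f')
    (hf0 : f 0 = 0)
    (M : ℝ → ℝ)
    (hM : ∀ τ, M τ = sSup (f '' Icc 0 τ) + sSup ((fun s => -f s) '' Icc 0 τ)) :
    (∀ T : ℝ, 0 < T → ∃ C : NNReal, LipschitzOnWith C M (Icc 0 T)) ∧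
    (∀ᵐ τ ∂(volume.restrict (Ioi (0:ℝ))),
      HasDerivAt M
        ((if f τ = sSup (f '' Icc 0 τ) then f' τ else 0)
          - (if -f τ = sSup ((fun s => -f s) '' Icc 0 τ) then f' τ else 0))
        τ) := by
  have hfc : Continuous f := by
    rw [continuous_iff_continuousAt]
    exact fun x => (hderiv x).differentiableAt.continuousAt
  have hnc : Continuous (fun s => -f s) := hfc.neg
  have hMeq : M = fun t => runMax f t + runMax (fun s => -f s) t := funext fun t => hM t
  have hnderiv : ∀ s : ℝ, HasDerivAt (fun u => -f u) (-(f' s)) s := fun s => (hderiv s).neg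
  constructor
  · intro T hT
    obtain ⟨K, hK⟩ := cont_lipschitzOnWith hderiv hf' T
    obtain ⟨K', hK'⟩ := cont_lipschitzOnWith hnderiv hf'.neg T
    refine ⟨K + K', ?_⟩
    rw [hMeq]
    exact (runMax_lipschitz hfc hK).add (runMax_lipschitz hnc hK')
  · have h1 := (runMax_mono hfc hf0).ae_differentiableAt
    have h2 := (runMax_mono hnc (by simp [hf0])).ae_differentiableAt
    filter_upwards [ae_restrict_of_ae h1, ae_restrict_of_ae h2,
      ae_restrict_mem measurableSet_Ioi] with τ hd1 hd2 hτ
    rw [mem_Ioi] at hτ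
    have hG : HasDerivAt (runMax f)
        (if f τ = sSup (f '' Icc 0 τ) then f' τ else 0) τ := by
      split_ifs with h
      · exact runMax_hasDerivAt_eq hfc hτ h hd1 (hderiv τ)
      · have hle : f τ ≤ runMax f τ := le_runMax hfc ⟨hτ.le, le_refl τ⟩
        exact runMax_hasDerivAt_zero hfc hτ (lt_of_le_of_ne hle h)
    have hH : HasDerivAt (runMax (fun s => -f s))
        (if -f τ = sSup ((fun s => -f s) '' Icc 0 τ) then -(f' τ) else 0) τ := by
      split_ifs with h
      · exact runMax_hasDerivAt_eq (f' := fun s => -(f' s)) hnc hτ h hd2 (hnderiv τ)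
      · have hle : -f τ ≤ runMax (fun s => -f s) τ := le_runMax hnc ⟨hτ.le, le_refl τ⟩
        exact runMax_hasDerivAt_zero hnc hτ (lt_of_le_of_ne hle h)
    have hsum := hG.add hH
    rw [hMeq]
    refine hsum.congr_deriv ?_
    split_ifs <;> ring
end
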